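/- arXiv:1601.00920 — 8 statements merged into one kernel-verified Lean document; each statement's English description precedes it below -/
import Mathlib

section
/- Let Z be a compact totally disconnected metric space. The set of finite Borel measures on Z is in bijection with the set of positive Z-linear homomorphisms from C(Z, ℤ) (continuous integer-valued functions on Z) to ℝ, where a homomorphism is positive if it sends nonnegative functions to nonnegative reals; the bijection sends a measure μ to the functional f ↦ ∫ f dμ. -/
open MeasureTheory TopologicalSpace Set

open scoped Classical ENNReal NNReal

noncomputable section StmtAux

variable {Z : Type*} [MetricSpace Z] [CompactSpace Z] [TotallyDisconnectedSpace Z]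

/-- The indicator function of a clopen set as a continuous integer valued map. -/
noncomputable def cchar (U : Set Z) (hU : IsClopen U) : C(Z, ℤ) :=
  ⟨fun z => if z ∈ U then 1 else 0, by
    refine continuous_if ?_ continuous_const.continuousOn continuous_const.continuousOn
    intro a ha
    rw [Set.setOf_mem_eq, hU.frontier_eq] at ha
    exact absurd ha (Set.notMem_empty a)⟩

lemma cchar_apply (U : Set Z) (hU : IsClopen U) (z : Z) :
    cchar U hU z = if z ∈ U then 1 else 0 := rfl

lemma cchar_congr {U V : Set Z} (hU : IsClopen U) (hV : IsClopen V) (h : U = V) :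
    cchar U hU = cchar V hV := by subst h; rfl

lemma cchar_nonneg (U : Set Z) (hU : IsClopen U) (z : Z) : 0 ≤ cchar U hU z := by
  rw [cchar_apply]; split <;> omega

lemma phi_mono (φ : C(Z, ℤ) →+ ℝ) (hφ : ∀ f : C(Z, ℤ), (∀ z, 0 ≤ f z) → 0 ≤ φ f)
    {f g : C(Z, ℤ)} (h : ∀ z, f z ≤ g z) : φ f ≤ φ g := by
  have h1 := hφ (g - f) (fun z => by
    have := h z
    simp only [ContinuousMap.sub_apply]
    omega)
  rw [map_sub] at h1
  linarith

/-- Every `f : C(Z, ℤ)` is a finite `ℤ`-combination of clopen characteristic functions,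
so two additive maps agreeing on the latter agree. -/
lemma addHom_ext_of_cchar (ψ₁ ψ₂ : C(Z, ℤ) →+ ℝ)
    (h : ∀ (U : Set Z) (hU : IsClopen U), ψ₁ (cchar U hU) = ψ₂ (cchar U hU)) : ψ₁ = ψ₂ := by
  ext f
  have hfin : (Set.range f).Finite :=
    (isCompact_range f.continuous).finite_of_discrete
  have hdec : f = ∑ n ∈ hfin.toFinset,
      n • cchar (f ⁻¹' {n}) ((isClopen_discrete {n}).preimage f.continuous) := by
    ext z
    rw [ContinuousMap.coe_sum, Finset.sum_apply]
    have hterm : ∀ n : ℤ,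
        (n • cchar (f ⁻¹' {n}) ((isClopen_discrete {n}).preimage f.continuous)) z
          = if f z = n then n else 0 := by
      intro n
      rw [ContinuousMap.coe_smul, Pi.smul_apply, cchar_apply]
      by_cases hz : f z = n <;> simp [Set.mem_preimage, hz]
    rw [Finset.sum_congr rfl fun n _ => hterm n, Finset.sum_ite_eq hfin.toFinset (f z) (fun n => n)]
    simp [hfin.mem_toFinset]
  rw [hdec, map_sum, map_sum]
  exact Finset.sum_congr rfl fun n _ => by rw [map_zsmul, map_zsmul, h]

variable [MeasurableSpace Z] [BorelSpace Z]

lemma integrable_cast (μ : Measure Z) [IsFiniteMeasure μ] (f : C(Z, ℤ)) :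
    Integrable (fun z => (f z : ℝ)) μ := by
  have hc : Continuous fun z => (f z : ℝ) :=
    (continuous_of_discreteTopology (α := ℤ) (f := fun n : ℤ => (n : ℝ))).comp f.continuous
  exact integrableOn_univ.mp (hc.continuousOn.integrableOn_compact isCompact_univ)

/-- Integration against a finite measure as an additive map `C(Z, ℤ) →+ ℝ`. -/
noncomputable def intHom (μ : Measure Z) [IsFiniteMeasure μ] : C(Z, ℤ) →+ ℝ where
  toFun f := ∫ z, (f z : ℝ) ∂μ
  map_zero' := by simp
  map_add' f g := by
    have h1 : (fun z => (((f + g) z : ℤ) : ℝ)) = fun z => ((f z : ℝ) + (g z : ℝ)) := by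
      ext z; simp [ContinuousMap.add_apply]
    show ∫ z, (((f + g) z : ℤ) : ℝ) ∂μ = _
    rw [h1, integral_add (integrable_cast μ f) (integrable_cast μ g)]

lemma intHom_apply (μ : Measure Z) [IsFiniteMeasure μ] (f : C(Z, ℤ)) :
    intHom μ f = ∫ z, (f z : ℝ) ∂μ := rfl

lemma intHom_cchar (μ : Measure Z) [IsFiniteMeasure μ] (U : Set Z) (hU : IsClopen U) :
    intHom μ (cchar U hU) = (μ U).toReal := by
  have h1 : (fun z => ((cchar U hU z : ℤ) : ℝ)) = U.indicator (fun _ => (1 : ℝ)) := by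
    ext z
    by_cases h : z ∈ U <;> simp [cchar_apply, h, Set.indicator]
  rw [intHom_apply, h1, integral_indicator_const (1 : ℝ) hU.2.measurableSet, smul_eq_mul,
    mul_one, measureReal_def]

lemma measure_ext_clopen (μ ν : Measure Z) [IsFiniteMeasure μ] [IsFiniteMeasure ν]
    (h : ∀ U : Set Z, IsClopen U → μ U = ν U) : μ = ν := by
  have hgen : ‹MeasurableSpace Z› = .generateFrom {s : Set Z | IsClopen s} := by
    rw [BorelSpace.measurable_eq (α := Z), isTopologicalBasis_isClopen.borel_eq_generateFrom]
  refine ext_of_generate_finite _ hgen ?_ (fun s hs => h s hs) (h _ isClopen_univ)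
  intro s hs t ht _
  exact hs.inter ht

/-- Disjoint clopen separation of a compact set from a closed set. -/
lemma exists_clopen_sep {K L : Set Z} (hK : IsCompact K) (hL : IsClosed L)
    (hd : Disjoint K L) : ∃ V : Set Z, IsClopen V ∧ K ⊆ V ∧ Disjoint V L := by
  have hsel : ∀ x (_ : x ∈ K), ∃ V : Set Z, IsClopen V ∧ x ∈ V ∧ V ⊆ Lᶜ :=
    fun x hx => compact_exists_isClopen_in_isOpen hL.isOpen_compl (disjoint_left.mp hd hx)
  choose V hVclopen hVmem hVsub using hsel
  obtain ⟨t, ht⟩ := hK.elim_nhds_subcover' V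
    (fun x hx => (hVclopen x hx).2.mem_nhds (hVmem x hx))
  refine ⟨⋃ x ∈ t, V x x.2, isClopen_biUnion_finset (fun x _ => hVclopen x x.2), ht, ?_⟩
  rw [disjoint_left]
  intro z hz
  simp only [Set.mem_iUnion] at hz
  obtain ⟨x, _, hzx⟩ := hz
  exact fun hzL => hVsub x x.2 hzx hzL

section Surjective

variable (φ : C(Z, ℤ) →+ ℝ) (hφ : ∀ f : C(Z, ℤ), (∀ z, 0 ≤ f z) → 0 ≤ φ f)

/-- The set of values of `φ` on clopen covers of `K`. -/
def coverVals (K : Set Z) : Set ℝ :=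
  {r : ℝ | ∃ U : Set Z, ∃ hU : IsClopen U, K ⊆ U ∧ r = φ (cchar U hU)}

lemma coverVals_nonempty (K : Set Z) : (coverVals φ K).Nonempty :=
  ⟨φ (cchar univ isClopen_univ), univ, isClopen_univ, subset_univ _, rfl⟩

include hφ in
lemma coverVals_bddBelow (K : Set Z) : BddBelow (coverVals φ K) := by
  refine ⟨0, fun r hr => ?_⟩
  obtain ⟨U, hU, _, rfl⟩ := hr
  exact hφ _ (cchar_nonneg U hU)

include hφ in
lemma coverVals_nonneg (K : Set Z) : 0 ≤ sInf (coverVals φ K) :=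
  le_csInf (coverVals_nonempty φ K) (fun r hr => by
    obtain ⟨U, hU, _, rfl⟩ := hr; exact hφ _ (cchar_nonneg U hU))

include hφ in
lemma coverVals_le {K U : Set Z} (hU : IsClopen U) (hKU : K ⊆ U) :
    sInf (coverVals φ K) ≤ φ (cchar U hU) :=
  csInf_le (coverVals_bddBelow φ hφ K) ⟨U, hU, hKU, rfl⟩

lemma le_coverVals {K : Set Z} {c : ℝ}
    (h : ∀ (U : Set Z) (hU : IsClopen U), K ⊆ U → c ≤ φ (cchar U hU)) :
    c ≤ sInf (coverVals φ K) :=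
  le_csInf (coverVals_nonempty φ K) (fun r hr => by
    obtain ⟨U, hU, hKU, rfl⟩ := hr; exact h U hU hKU)

include hφ in
lemma coverVals_mono {K L : Set Z} (h : K ⊆ L) :
    sInf (coverVals φ K) ≤ sInf (coverVals φ L) :=
  le_coverVals φ (fun U hU hLU => coverVals_le φ hφ hU (h.trans hLU))

include hφ in
lemma cchar_mono_le {U V : Set Z} (hU : IsClopen U) (hV : IsClopen V) (h : U ⊆ V) :
    φ (cchar U hU) ≤ φ (cchar V hV) := by
  refine phi_mono φ hφ (fun z => ?_)
  rw [cchar_apply, cchar_apply]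
  by_cases hz : z ∈ U
  · simp [hz, h hz]
  · simp only [hz, if_false]
    split <;> omega

/-- Characteristic functions add along disjoint unions. -/
lemma cchar_union_disjoint {U V : Set Z} (hU : IsClopen U) (hV : IsClopen V)
    (hd : Disjoint U V) :
    cchar (U ∪ V) (hU.union hV) = cchar U hU + cchar V hV := by
  ext z
  simp only [ContinuousMap.add_apply, cchar_apply, Set.mem_union]
  by_cases hzU : z ∈ U
  · have hzV : z ∉ V := fun h => disjoint_left.mp hd hzU h
    simp [hzU, hzV]
  · by_cases hzV : z ∈ V <;> simp [hzU, hzV]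

include hφ in
lemma coverVals_sup_le (K L : Set Z) :
    sInf (coverVals φ (K ∪ L)) ≤ sInf (coverVals φ K) + sInf (coverVals φ L) := by
  have key : ∀ r₁ ∈ coverVals φ K, ∀ r₂ ∈ coverVals φ L,
      sInf (coverVals φ (K ∪ L)) ≤ r₁ + r₂ := by
    rintro r₁ ⟨U, hU, hKU, rfl⟩ r₂ ⟨V, hV, hLV, rfl⟩
    have h1 : sInf (coverVals φ (K ∪ L)) ≤ φ (cchar (U ∪ V) (hU.union hV)) :=
      coverVals_le φ hφ (hU.union hV) (union_subset_union hKU hLV)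
    refine h1.trans ?_
    have h2 : ∀ z, cchar (U ∪ V) (hU.union hV) z ≤ (cchar U hU + cchar V hV) z := by
      intro z
      simp only [ContinuousMap.add_apply, cchar_apply, Set.mem_union]
      by_cases hzU : z ∈ U <;> by_cases hzV : z ∈ V <;> simp [hzU, hzV]
    have := phi_mono φ hφ h2
    rwa [map_add] at this
  have h3 : ∀ r₁ ∈ coverVals φ K,
      sInf (coverVals φ (K ∪ L)) - r₁ ≤ sInf (coverVals φ L) := fun r₁ h₁ =>
    le_csInf (coverVals_nonempty φ L) (fun r₂ h₂ => by linarith [key r₁ h₁ r₂ h₂])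
  have h4 : sInf (coverVals φ (K ∪ L)) - sInf (coverVals φ L) ≤ sInf (coverVals φ K) :=
    le_csInf (coverVals_nonempty φ K) (fun r₁ h₁ => by linarith [h3 r₁ h₁])
  linarith

include hφ in
lemma coverVals_sup_disjoint (K L : Set Z) (hK : IsCompact K) (hL : IsCompact L)
    (hd : Disjoint K L) :
    sInf (coverVals φ (K ∪ L)) = sInf (coverVals φ K) + sInf (coverVals φ L) := by
  refine le_antisymm (coverVals_sup_le φ hφ K L) ?_
  refine le_coverVals φ (fun U hU hKLU => ?_)
  obtain ⟨V, hV, hKV, hVL⟩ := exists_clopen_sep hK hL.isClosed hd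
  have hU₁ : IsClopen (U ∩ V) := hU.inter hV
  have hU₂ : IsClopen (U \ V) := hU.diff hV
  have hK1 : K ⊆ U ∩ V :=
    subset_inter ((subset_union_left).trans hKLU) hKV
  have hL2 : L ⊆ U \ V := fun z hz =>
    ⟨hKLU (Or.inr hz), fun hzV => disjoint_left.mp hVL hzV hz⟩
  have hdisj : Disjoint (U ∩ V) (U \ V) :=
    disjoint_sdiff_right.mono_left inter_subset_right
  have hunion : (U ∩ V) ∪ (U \ V) = U := inter_union_diff U V
  have hsum : φ (cchar (U ∩ V) hU₁) + φ (cchar (U \ V) hU₂) = φ (cchar U hU) := by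
    rw [← map_add, ← cchar_union_disjoint hU₁ hU₂ hdisj]
    exact congrArg φ (cchar_congr _ _ hunion)
  calc sInf (coverVals φ K) + sInf (coverVals φ L)
      ≤ φ (cchar (U ∩ V) hU₁) + φ (cchar (U \ V) hU₂) :=
        add_le_add (coverVals_le φ hφ hU₁ hK1) (coverVals_le φ hφ hU₂ hL2)
    _ = φ (cchar U hU) := hsum

/-- The content associated to a positive additive functional. -/
def rContent : Content Z where
  toFun K := (sInf (coverVals φ (K : Set Z))).toNNReal
  mono' K₁ K₂ h := Real.toNNReal_mono (coverVals_mono φ hφ h)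
  sup_disjoint' K₁ K₂ hd _ _ := by
    have hc : ((K₁ ⊔ K₂ : Compacts Z) : Set Z) = (K₁ : Set Z) ∪ (K₂ : Set Z) := rfl
    have h2 := coverVals_sup_disjoint φ hφ (K₁ : Set Z) (K₂ : Set Z) K₁.2 K₂.2 hd
    rw [hc, h2,
      Real.toNNReal_add (coverVals_nonneg φ hφ _) (coverVals_nonneg φ hφ _)]
  sup_le' K₁ K₂ := by
    have hc : ((K₁ ⊔ K₂ : Compacts Z) : Set Z) = (K₁ : Set Z) ∪ (K₂ : Set Z) := rfl
    rw [hc]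
    exact (Real.toNNReal_mono (coverVals_sup_le φ hφ _ _)).trans Real.toNNReal_add_le

lemma rContent_clopen (U : Set Z) (hU : IsClopen U) :
    (rContent φ hφ).toFun ⟨U, hU.1.isCompact⟩ = (φ (cchar U hU)).toNNReal := by
  show (sInf (coverVals φ U)).toNNReal = _
  congr 1
  exact le_antisymm (coverVals_le φ hφ hU subset_rfl)
    (le_coverVals φ fun V hV hUV => cchar_mono_le φ hφ hU hV hUV)

/-- The measure associated to a positive additive functional. -/
def rMeasure : Measure Z := (rContent φ hφ).measure

lemma rMeasure_clopen (U : Set Z) (hU : IsClopen U) :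
    rMeasure φ hφ U = ((φ (cchar U hU)).toNNReal : ℝ≥0∞) := by
  rw [rMeasure, Content.measure_apply _ hU.2.measurableSet]
  have h1 : (rContent φ hφ).outerMeasure U = (rContent φ hφ).innerContent ⟨U, hU.2⟩ :=
    (rContent φ hφ).outerMeasure_opens ⟨U, hU.2⟩
  rw [h1, (rContent φ hφ).innerContent_of_isCompact hU.1.isCompact hU.2,
    ]
  exact congrArg ENNReal.ofNNReal (rContent_clopen φ hφ U hU)

lemma rMeasure_isFiniteMeasure : IsFiniteMeasure (rMeasure φ hφ) := by
  constructor
  rw [rMeasure_clopen φ hφ univ isClopen_univ]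
  exact ENNReal.coe_lt_top

include hφ in
lemma exists_rep : ∃ μ : Measure Z, ∃ h : IsFiniteMeasure μ,
    @intHom Z _ _ _ _ _ μ h = φ := by
  refine ⟨rMeasure φ hφ, rMeasure_isFiniteMeasure φ hφ, ?_⟩
  haveI := rMeasure_isFiniteMeasure φ hφ
  refine addHom_ext_of_cchar _ _ (fun U hU => ?_)
  rw [intHom_cchar, rMeasure_clopen φ hφ U hU, ENNReal.coe_toReal,
    Real.coe_toNNReal _ (hφ _ (cchar_nonneg U hU))]

end Surjective

end StmtAux

/-- For a compact totally disconnected metric space `Z`, the set of finite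
Borel measures on `Z` is in bijection with the set of positive `ℤ`-linear homomorphisms
`C(Z, ℤ) → ℝ`, the bijection sending `μ` to `f ↦ ∫ f dμ`. -/
theorem stmt0 (Z : Type*) [MetricSpace Z] [CompactSpace Z] [TotallyDisconnectedSpace Z]
    [MeasurableSpace Z] [BorelSpace Z] :
    ∃ e : {μ : Measure Z // IsFiniteMeasure μ} ≃
        {φ : C(Z, ℤ) →+ ℝ // ∀ f : C(Z, ℤ), (∀ z, 0 ≤ f z) → 0 ≤ φ f},
      ∀ (μ : {μ : Measure Z // IsFiniteMeasure μ}) (f : C(Z, ℤ)),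
        (e μ : C(Z, ℤ) →+ ℝ) f = ∫ z, (f z : ℝ) ∂μ.1 := by
  classical
  let T : {μ : Measure Z // IsFiniteMeasure μ} →
      {φ : C(Z, ℤ) →+ ℝ // ∀ f : C(Z, ℤ), (∀ z, 0 ≤ f z) → 0 ≤ φ f} := fun μ =>
    haveI := μ.2
    ⟨intHom μ.1, fun f hf => integral_nonneg fun z => by
      have h0 : (0 : ℝ) ≤ (f z : ℝ) := by exact_mod_cast hf z
      simpa using h0⟩
  have hinj : Function.Injective T := by
    rintro ⟨μ, hμ⟩ ⟨ν, hν⟩ h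
    haveI := hμ; haveI := hν
    apply Subtype.ext
    have h' : intHom μ = intHom ν := congrArg Subtype.val h
    refine measure_ext_clopen μ ν (fun U hU => ?_)
    have h2 := congrFun (congrArg DFunLike.coe h') (cchar U hU)
    rw [intHom_cchar, intHom_cchar] at h2
    exact (ENNReal.toReal_eq_toReal_iff' (measure_ne_top μ U) (measure_ne_top ν U)).mp h2
  have hsurj : Function.Surjective T := by
    rintro ⟨φ, hφ⟩
    obtain ⟨μ, hfin, hμφ⟩ := exists_rep φ hφ
    exact ⟨⟨μ, hfin⟩, Subtype.ext hμφ⟩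
  exact ⟨Equiv.ofBijective T ⟨hinj, hsurj⟩, fun μ f => rfl⟩
end

section
/- Let A be a d×d matrix with strictly positive entries. Then the intersection over all n ≥ 1 of A^n(C), where C is the cone of vectors in ℝ^d whose entries are all nonnegative or all nonpositive, is exactly the line spanned by the Perron–Frobenius eigenvector of A (the unique up to scale eigenvector with strictly positive entries). -/
open Finset

lemma perron_exists (d : ℕ) (hd : 1 ≤ d) (A : Matrix (Fin d) (Fin d) ℝ)
    (hA : ∀ i j, 0 < A i j) :
    ∃ (v : Fin d → ℝ) (r : ℝ), (∀ i, 0 < v i) ∧ 0 < r ∧ A.mulVec v = r • v := by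
  haveI : NeZero d := ⟨by omega⟩
  have hne : (univ : Finset (Fin d)).Nonempty := univ_nonempty
  set m : ℝ := univ.inf' hne (fun i => univ.inf' hne (A i)) with hm_def
  set Mx : ℝ := univ.sup' hne (fun i => univ.sup' hne (A i)) with hMx_def
  have hm : 0 < m := by
    rw [hm_def, lt_inf'_iff]
    intro i _
    rw [lt_inf'_iff]
    exact fun j _ => hA i j
  have hmle : ∀ i j, m ≤ A i j := by
    intro i j
    exact le_trans (inf'_le _ (mem_univ i)) (inf'_le _ (mem_univ j))
  have hMge : ∀ i j, A i j ≤ Mx := by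
    intro i j
    have h1 : A i j ≤ univ.sup' hne (A i) := le_sup' (A i) (mem_univ j)
    have h2 : univ.sup' hne (A i) ≤ Mx := le_sup' (fun i => univ.sup' hne (A i)) (mem_univ i)
    exact le_trans h1 h2
  have hMx : 0 < Mx := lt_of_lt_of_le hm (by
    obtain ⟨i⟩ := (inferInstance : Nonempty (Fin d))
    exact le_trans (hmle i i) (hMge i i))
  set δ : ℝ := m / Mx with hδ_def
  have hδ : 0 < δ := div_pos hm hMx
  have hδ1 : δ ≤ 1 := by
    rw [hδ_def, div_le_one hMx]
    obtain ⟨i⟩ := (inferInstance : Nonempty (Fin d))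
    exact le_trans (hmle i i) (hMge i i)
  set K : Set (Fin d → ℝ) := Set.pi Set.univ (fun _ => Set.Icc δ 1) with hK_def
  have hKmem : ∀ u : Fin d → ℝ, u ∈ K ↔ ∀ i, δ ≤ u i ∧ u i ≤ 1 := by
    intro u; simp [hK_def, Set.mem_pi, Set.mem_Icc, Pi.le_def, forall_and]
  have hKpos : ∀ u ∈ K, ∀ i, 0 < u i := fun u hu i => lt_of_lt_of_le hδ ((hKmem u).1 hu i).1
  have hKcomp : IsCompact K := isCompact_univ_pi (fun _ => isCompact_Icc)
  have hKne : K.Nonempty := ⟨fun _ => 1, (hKmem _).2 fun i => ⟨hδ1, le_refl 1⟩⟩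
  set g : (Fin d → ℝ) → ℝ := fun u => univ.inf' hne (fun i => A.mulVec u i / u i) with hg_def
  have hgcont : ContinuousOn g K := by
    apply ContinuousOn.finset_inf'_apply hne
    intro i _
    apply ContinuousOn.div
    · exact Continuous.continuousOn (by
        simpa [Matrix.mulVec, dotProduct, Pi.smul_apply, smul_eq_mul] using
          (continuous_finset_sum univ (fun j _ => (continuous_apply j).const_smul (A i j)) :
            Continuous fun a : Fin d → ℝ => ∑ j, A i j • a j))
    · exact (continuous_apply i).continuousOn
    · intro u hu; exact ne_of_gt (hKpos u hu i)
  obtain ⟨u₀, hu₀K, hmax⟩ := hKcomp.exists_isMaxOn hKne hgcont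
  set r : ℝ := g u₀ with hr_def
  have hu₀pos : ∀ i, 0 < u₀ i := hKpos u₀ hu₀K
  have hAupos : ∀ (u : Fin d → ℝ), (∀ i, 0 < u i) → ∀ i, 0 < A.mulVec u i := by
    intro u hu i
    exact Finset.sum_pos (fun j _ => mul_pos (hA i j) (hu j)) hne
  have hr : 0 < r := by
    rw [hr_def, hg_def, lt_inf'_iff]
    exact fun i _ => div_pos (hAupos u₀ hu₀pos i) (hu₀pos i)
  have hrle : ∀ i, r * u₀ i ≤ A.mulVec u₀ i := by
    intro i
    have h2 : r ≤ A.mulVec u₀ i / u₀ i := by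
      rw [hr_def, hg_def]; exact inf'_le _ (mem_univ i)
    calc r * u₀ i ≤ (A.mulVec u₀ i / u₀ i) * u₀ i := by
          exact mul_le_mul_of_nonneg_right h2 (le_of_lt (hu₀pos i))
      _ = A.mulVec u₀ i := div_mul_cancel₀ _ (ne_of_gt (hu₀pos i))
  -- key: no positive u whose image has all ratios > r
  have hnoimp : ∀ (u : Fin d → ℝ), (∀ i, 0 < u i) →
      (∀ i, r < A.mulVec (A.mulVec u) i / (A.mulVec u) i) → False := by
    intro u hu hstrict
    set w : Fin d → ℝ := A.mulVec u with hw_def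
    have hwpos : ∀ i, 0 < w i := hAupos u hu
    set S : ℝ := ∑ k, u k with hS
    have hSpos : 0 < S := sum_pos (fun k _ => hu k) hne
    have hwlow : ∀ i, m * S ≤ w i := by
      intro i
      calc m * S = ∑ k, m * u k := by rw [hS, mul_sum]
        _ ≤ ∑ k, A i k * u k :=
            sum_le_sum fun k _ => mul_le_mul_of_nonneg_right (hmle i k) (hu k).le
        _ = w i := rfl
    have hwhigh : ∀ i, w i ≤ Mx * S := by
      intro i
      calc w i = ∑ k, A i k * u k := rfl
        _ ≤ ∑ k, Mx * u k :=
            sum_le_sum fun k _ => mul_le_mul_of_nonneg_right (hMge i k) (hu k).le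
        _ = Mx * S := by rw [hS, mul_sum]
    set s : ℝ := univ.sup' hne w with hs_def
    obtain ⟨i₀⟩ := (inferInstance : Nonempty (Fin d))
    have hs_pos : 0 < s := lt_of_lt_of_le (hwpos i₀) (le_sup' w (mem_univ i₀))
    have hs_le : s ≤ Mx * S := by
      rw [hs_def, sup'_le_iff]; exact fun i _ => hwhigh i
    set u1 : Fin d → ℝ := s⁻¹ • w with hu1_def
    have hu1 : ∀ i, u1 i = w i / s := by
      intro i; rw [hu1_def]; simp [div_eq_inv_mul]
    have hu1pos : ∀ i, 0 < u1 i := by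
      intro i; rw [hu1 i]; exact div_pos (hwpos i) hs_pos
    have hu1K : u1 ∈ K := by
      rw [hKmem]; intro i
      constructor
      · rw [hu1 i, hδ_def, div_le_div_iff₀ hMx hs_pos]
        calc m * s ≤ m * (Mx * S) := mul_le_mul_of_nonneg_left hs_le hm.le
          _ = (m * S) * Mx := by ring
          _ ≤ w i * Mx := mul_le_mul_of_nonneg_right (hwlow i) hMx.le
      · rw [hu1 i]
        exact div_le_one_of_le₀ (le_sup' w (mem_univ i)) hs_pos.le
    have hg1 : r < g u1 := by
      rw [hg_def, lt_inf'_iff]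
      intro i _
      have h1 : A.mulVec u1 i = s⁻¹ * A.mulVec w i := by
        rw [hu1_def, Matrix.mulVec_smul]; simp
      rw [h1, hu1 i]
      have h2 : s⁻¹ * A.mulVec w i / (w i / s) = A.mulVec w i / w i := by
        field_simp
      rw [h2]
      exact hstrict i
    exact absurd (hmax hu1K) (not_le.mpr hg1)
  refine ⟨u₀, r, hu₀pos, hr, ?_⟩
  by_contra hne2
  have hstrictj : ∃ j, r * u₀ j < A.mulVec u₀ j := by
    by_contra hno
    push_neg at hno
    apply hne2
    funext i
    have heq := le_antisymm (hno i) (hrle i)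
    simp only [Pi.smul_apply, smul_eq_mul]
    linarith [heq]
  obtain ⟨j, hj⟩ := hstrictj
  apply hnoimp u₀ hu₀pos
  intro i
  rw [lt_div_iff₀ (hAupos u₀ hu₀pos i)]
  have key : ∑ k, A i k * (A.mulVec u₀ k - r * u₀ k)
      = A.mulVec (A.mulVec u₀) i - r * A.mulVec u₀ i := by
    simp only [Matrix.mulVec, dotProduct, Finset.mul_sum, mul_sub,
      Finset.sum_sub_distrib]
    congr 1
    exact sum_congr rfl fun k _ => by ring
  have hpos : 0 < ∑ k, A i k * (A.mulVec u₀ k - r * u₀ k) := by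
    apply sum_pos' (fun k _ => mul_nonneg (hA i k).le (sub_nonneg.mpr (hrle k)))
    exact ⟨j, mem_univ j, mul_pos (hA i j) (sub_pos.mpr hj)⟩
  rw [key] at hpos
  linarith

lemma perron_aux (d : ℕ) (hd : 1 ≤ d) (A : Matrix (Fin d) (Fin d) ℝ)
    (hA : ∀ i j, 0 < A i j)
    (v : Fin d → ℝ) (r : ℝ) (hv : ∀ i, 0 < v i) (hAv : A.mulVec v = r • v)
    (w : Fin d → ℝ) (μ : ℝ) (hw : ∀ i, 0 < w i) (hAw : A.mulVec w = μ • w) :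
    (∃ c : ℝ, 0 < c ∧ w = c • v) ∨ r < μ := by
  haveI : NeZero d := ⟨by omega⟩
  have hne : (univ : Finset (Fin d)).Nonempty := univ_nonempty
  set c : ℝ := univ.inf' hne (fun i => w i / v i) with hc
  obtain ⟨i₀, _, hci₀⟩ := exists_mem_eq_inf' hne (fun i => w i / v i)
  have hcpos : 0 < c := by rw [hc, lt_inf'_iff]; exact fun i _ => div_pos (hw i) (hv i)
  have hcv : ∀ i, c * v i ≤ w i := by
    intro i
    have h1 : c ≤ w i / v i := by rw [hc]; exact inf'_le _ (mem_univ i)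
    calc c * v i ≤ (w i / v i) * v i := mul_le_mul_of_nonneg_right h1 (hv i).le
      _ = w i := div_mul_cancel₀ _ (ne_of_gt (hv i))
  by_cases hcase : w = c • v
  · exact Or.inl ⟨c, hcpos, hcase⟩
  · right
    have hj : ∃ j, c * v j < w j := by
      by_contra hno; push_neg at hno
      exact hcase (funext fun i => by
        have := le_antisymm (hno i) (hcv i)
        simp only [Pi.smul_apply, smul_eq_mul]
        linarith)
    obtain ⟨j, hj⟩ := hj
    have hwi₀ : w i₀ = c * v i₀ := by
      rw [← hc] at hci₀
      rw [hci₀, div_mul_cancel₀ _ (ne_of_gt (hv i₀))]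
    have hsum : 0 < ∑ k, A i₀ k * (w k - c * v k) :=
      sum_pos' (fun k _ => mul_nonneg (hA i₀ k).le (sub_nonneg.mpr (hcv k)))
        ⟨j, mem_univ j, mul_pos (hA i₀ j) (sub_pos.mpr hj)⟩
    have h1 : ∑ k, A i₀ k * w k = μ * w i₀ := by
      have := congrFun hAw i₀
      simpa [Matrix.mulVec, dotProduct] using this
    have h2 : ∑ k, A i₀ k * v k = r * v i₀ := by
      have := congrFun hAv i₀
      simpa [Matrix.mulVec, dotProduct] using this
    have hexp : ∑ k, A i₀ k * (w k - c * v k) = μ * w i₀ - c * (r * v i₀) := by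
      simp only [mul_sub, sum_sub_distrib]
      rw [h1]
      congr 1
      calc ∑ k, A i₀ k * (c * v k) = c * ∑ k, A i₀ k * v k := by
            rw [mul_sum]; exact sum_congr rfl fun k _ => by ring
        _ = c * (r * v i₀) := by rw [h2]
    rw [hexp, hwi₀] at hsum
    nlinarith [mul_pos hcpos (hv i₀)]

lemma perron_unique (d : ℕ) (hd : 1 ≤ d) (A : Matrix (Fin d) (Fin d) ℝ)
    (hA : ∀ i j, 0 < A i j)
    (v : Fin d → ℝ) (r : ℝ) (hv : ∀ i, 0 < v i) (hAv : A.mulVec v = r • v)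
    (w : Fin d → ℝ) (μ : ℝ) (hw : ∀ i, 0 < w i) (hAw : A.mulVec w = μ • w) :
    ∃ c : ℝ, 0 < c ∧ w = c • v := by
  rcases perron_aux d hd A hA v r hv hAv w μ hw hAw with h | h1
  · exact h
  rcases perron_aux d hd A hA w μ hw hAw v r hv hAv with h | h2
  · obtain ⟨c, hc, hvc⟩ := h
    refine ⟨c⁻¹, inv_pos.mpr hc, funext fun i => ?_⟩
    have := congrFun hvc i
    simp only [Pi.smul_apply, smul_eq_mul] at this ⊢
    field_simp [this]
    rw [this]; ring
  · linarith

lemma pow_entries_nonneg {d : ℕ} (A : Matrix (Fin d) (Fin d) ℝ)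
    (hA : ∀ i j, 0 ≤ A i j) (n : ℕ) : ∀ i j, 0 ≤ (A ^ n) i j := by
  induction n with
  | zero =>
    intro i j
    simp only [pow_zero, Matrix.one_apply]
    split <;> norm_num
  | succ n ih =>
    intro i j
    rw [pow_succ, Matrix.mul_apply]
    exact Finset.sum_nonneg fun k _ => mul_nonneg (ih i k) (hA k j)

lemma mulVec_nonneg {d : ℕ} (M : Matrix (Fin d) (Fin d) ℝ)
    (hM : ∀ i j, 0 ≤ M i j) (u : Fin d → ℝ) (hu : ∀ i, 0 ≤ u i) :
    ∀ i, 0 ≤ M.mulVec u i := fun i => by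
  simpa [Matrix.mulVec, dotProduct] using
    Finset.sum_nonneg fun k (_ : k ∈ univ) => mul_nonneg (hM i k) (hu k)

lemma mulVec_nonpos {d : ℕ} (M : Matrix (Fin d) (Fin d) ℝ)
    (hM : ∀ i j, 0 ≤ M i j) (u : Fin d → ℝ) (hu : ∀ i, u i ≤ 0) :
    ∀ i, M.mulVec u i ≤ 0 := fun i => by
  simpa [Matrix.mulVec, dotProduct] using
    Finset.sum_nonpos fun k (_ : k ∈ univ) => mul_nonpos_of_nonneg_of_nonpos (hM i k) (hu k)

section Stoch

variable {d : ℕ} (hne : (univ : Finset (Fin d)).Nonempty)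
  (B : Matrix (Fin d) (Fin d) ℝ) (ε : ℝ)
  (hB : ∀ i k, ε ≤ B i k) (hε : 0 ≤ ε)
  (hrow : ∀ i, ∑ k, B i k = 1)

include hne hB hε hrow

lemma stoch_bounds (w : Fin d → ℝ) :
    ∀ i, univ.inf' hne w ≤ B.mulVec w i ∧ B.mulVec w i ≤ univ.sup' hne w := by
  intro i
  constructor
  · calc univ.inf' hne w = ∑ k, B i k * univ.inf' hne w := by
          rw [← sum_mul, hrow i, one_mul]
      _ ≤ ∑ k, B i k * w k :=
          sum_le_sum fun k _ => mul_le_mul_of_nonneg_left (inf'_le w (mem_univ k))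
            (le_trans hε (hB i k))
      _ = B.mulVec w i := rfl
  · calc B.mulVec w i = ∑ k, B i k * w k := rfl
      _ ≤ ∑ k, B i k * univ.sup' hne w :=
          sum_le_sum fun k _ => mul_le_mul_of_nonneg_left (le_sup' w (mem_univ k))
            (le_trans hε (hB i k))
      _ = univ.sup' hne w := by rw [← sum_mul, hrow i, one_mul]

lemma dobrushin_step (w : Fin d → ℝ) :
    univ.sup' hne (B.mulVec w) - univ.inf' hne (B.mulVec w)
      ≤ (1 - d * ε) * (univ.sup' hne w - univ.inf' hne w) := by
  set iw := univ.inf' hne w with hiw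
  set sw := univ.sup' hne w with hsw
  have hwsub : (0:ℝ) ≤ sw - iw := by
    obtain ⟨k0, hk0⟩ := hne
    exact sub_nonneg.mpr (le_trans (inf'_le w (mem_univ k0)) (le_sup' w (mem_univ k0)))
  obtain ⟨i, _, hi⟩ := exists_mem_eq_sup' hne (B.mulVec w)
  obtain ⟨j, _, hj⟩ := exists_mem_eq_inf' hne (B.mulVec w)
  rw [hi, hj]
  have hsub : ∑ k, (B i k - B j k) * (w k - iw) = B.mulVec w i - B.mulVec w j := by
    have e : ∀ k : Fin d, (B i k - B j k) * (w k - iw)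
        = B i k * w k - B j k * w k - (B i k * iw - B j k * iw) := fun k => by ring
    simp only [e, sum_sub_distrib, ← sum_mul, hrow i, hrow j]
    simp [Matrix.mulVec, dotProduct]
  have hterm : ∀ k : Fin d, (B i k - B j k) * (w k - iw) ≤ max (B i k - B j k) 0 * (sw - iw) := by
    intro k
    rcases le_or_gt 0 (B i k - B j k) with h | h
    · rw [max_eq_left h]
      exact mul_le_mul_of_nonneg_left (sub_le_sub_right (le_sup' w (mem_univ k)) iw) h
    · rw [max_eq_right h.le, zero_mul]
      have h1 : (0:ℝ) ≤ w k - iw := sub_nonneg.mpr (inf'_le w (mem_univ k))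
      exact mul_nonpos_of_nonpos_of_nonneg h.le h1
  have hmaxsum : ∑ k, max (B i k - B j k) 0 ≤ 1 - d * ε := by
    have e : ∀ k : Fin d, max (B i k - B j k) 0 = B i k - min (B i k) (B j k) := by
      intro k
      rcases le_total (B i k) (B j k) with h | h
      · rw [max_eq_right (by linarith), min_eq_left h]; ring
      · rw [max_eq_left (by linarith), min_eq_right h]
    have hminsum : (d : ℝ) * ε ≤ ∑ k, min (B i k) (B j k) := by
      calc (d : ℝ) * ε = ∑ _k : Fin d, ε := by
            rw [sum_const, card_univ, Fintype.card_fin, nsmul_eq_mul]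
        _ ≤ ∑ k, min (B i k) (B j k) :=
            sum_le_sum fun k _ => le_min (hB i k) (hB j k)
    simp only [e, sum_sub_distrib, hrow i]
    linarith
  calc B.mulVec w i - B.mulVec w j = ∑ k, (B i k - B j k) * (w k - iw) := hsub.symm
    _ ≤ ∑ k, max (B i k - B j k) 0 * (sw - iw) := sum_le_sum fun k _ => hterm k
    _ = (∑ k, max (B i k - B j k) 0) * (sw - iw) := by rw [sum_mul]
    _ ≤ (1 - d * ε) * (sw - iw) := mul_le_mul_of_nonneg_right hmaxsum hwsub

lemma dobrushin_iter (hq : 0 ≤ 1 - d * ε) (n : ℕ) (w : Fin d → ℝ) :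
    univ.sup' hne ((B ^ n).mulVec w) - univ.inf' hne ((B ^ n).mulVec w)
      ≤ (1 - d * ε) ^ n * (univ.sup' hne w - univ.inf' hne w) := by
  induction n with
  | zero => simp [Matrix.one_mulVec]
  | succ n ih =>
    have hstep : (B ^ (n + 1)).mulVec w = B.mulVec ((B ^ n).mulVec w) := by
      rw [pow_succ', ← Matrix.mulVec_mulVec]
    rw [hstep, pow_succ']
    calc univ.sup' hne (B.mulVec ((B ^ n).mulVec w))
          - univ.inf' hne (B.mulVec ((B ^ n).mulVec w))
        ≤ (1 - d * ε) * (univ.sup' hne ((B ^ n).mulVec w)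
            - univ.inf' hne ((B ^ n).mulVec w)) :=
          dobrushin_step hne B ε hB hε hrow _
      _ ≤ (1 - d * ε) * ((1 - d * ε) ^ n * (univ.sup' hne w - univ.inf' hne w)) :=
          mul_le_mul_of_nonneg_left ih hq
      _ = (1 - d * ε) * (1 - d * ε) ^ n * (univ.sup' hne w - univ.inf' hne w) := by ring

lemma stoch_iter_bounds (n : ℕ) (w : Fin d → ℝ) :
    univ.inf' hne w ≤ univ.inf' hne ((B ^ n).mulVec w) ∧
      univ.sup' hne ((B ^ n).mulVec w) ≤ univ.sup' hne w := by
  induction n with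
  | zero => simp [Matrix.one_mulVec]
  | succ n ih =>
    have hstep : (B ^ (n + 1)).mulVec w = B.mulVec ((B ^ n).mulVec w) := by
      rw [pow_succ', ← Matrix.mulVec_mulVec]
    rw [hstep]
    constructor
    · apply le_inf'
      intro i _
      exact le_trans ih.1 ((stoch_bounds hne B ε hB hε hrow _ i).1)
    · apply sup'_le
      intro i _
      exact le_trans ((stoch_bounds hne B ε hB hε hrow _ i).2) ih.2

end Stoch

lemma myConjPow (d : ℕ) (A B : Matrix (Fin d) (Fin d) ℝ) (v : Fin d → ℝ) (r : ℝ)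
    (hv : ∀ i, 0 < v i) (hr : 0 < r)
    (hB : ∀ i k, B i k = A i k * v k / (r * v i)) (n : ℕ) (w : Fin d → ℝ) :
    (A ^ n).mulVec (fun k => v k * w k) = fun i => r ^ n * v i * (B ^ n).mulVec w i := by
  induction n with
  | zero => funext i; simp [Matrix.one_mulVec]
  | succ n ih =>
    funext i
    rw [pow_succ', ← Matrix.mulVec_mulVec, ih]
    have e : (fun k => r ^ n * v k * (B ^ n).mulVec w k)
        = fun k => v k * (r ^ n * (B ^ n).mulVec w k) := funext fun k => by ring
    rw [e]
    have one : ∀ u : Fin d → ℝ, A.mulVec (fun k => v k * u k) i = r * v i * B.mulVec u i := by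
      intro u
      have h1 : B.mulVec u i = ∑ k, A i k * v k / (r * v i) * u k := by
        simp only [Matrix.mulVec, dotProduct, hB]
      rw [h1]
      show ∑ k, A i k * (v k * u k) = r * v i * ∑ k, A i k * v k / (r * v i) * u k
      rw [mul_sum]
      refine sum_congr rfl fun k _ => ?_
      have hvi := (hv i).ne'
      field_simp
    rw [one]
    have hsm : (fun k => r ^ n * (B ^ n).mulVec w k) = r ^ n • (B ^ n).mulVec w := rfl
    rw [hsm, Matrix.mulVec_smul]
    simp only [Pi.smul_apply, smul_eq_mul]
    have h2 : (B ^ (n + 1)).mulVec w = B.mulVec ((B ^ n).mulVec w) := by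
      rw [pow_succ', ← Matrix.mulVec_mulVec]
    rw [h2]
    ring

lemma inter_sub (d : ℕ) (hd : 1 ≤ d) (A : Matrix (Fin d) (Fin d) ℝ)
    (hA : ∀ i j, 0 < A i j) (v : Fin d → ℝ) (r : ℝ)
    (hv : ∀ i, 0 < v i) (hr : 0 < r) (hAv : A.mulVec v = r • v)
    (x : Fin d → ℝ)
    (hx : ∀ n : ℕ, ∃ u : Fin d → ℝ, (∀ k, 0 ≤ u k) ∧ (A ^ (n + 1)).mulVec u = x) :
    ∃ c : ℝ, x = c • v := by
  haveI : NeZero d := ⟨by omega⟩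
  have hne : (univ : Finset (Fin d)).Nonempty := univ_nonempty
  set B : Matrix (Fin d) (Fin d) ℝ := fun i k => A i k * v k / (r * v i) with hBdef
  have hB : ∀ i k, B i k = A i k * v k / (r * v i) := fun i k => rfl
  have hBpos : ∀ i k, 0 < B i k := fun i k =>
    div_pos (mul_pos (hA i k) (hv k)) (mul_pos hr (hv i))
  set ε : ℝ := univ.inf' hne (fun i => univ.inf' hne (B i)) with hεdef
  have hεpos : 0 < ε := by
    rw [hεdef, lt_inf'_iff]
    intro i _
    rw [lt_inf'_iff]
    exact fun k _ => hBpos i k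
  have hεle : ∀ i k, ε ≤ B i k := by
    intro i k
    have h1 : univ.inf' hne (B i) ≤ B i k := inf'_le (B i) (mem_univ k)
    have h2 : ε ≤ univ.inf' hne (B i) :=
      inf'_le (fun i => univ.inf' hne (B i)) (mem_univ i)
    exact le_trans h2 h1
  set β : ℝ := univ.sup' hne (fun i => univ.sup' hne (B i)) with hβdef
  have hβge : ∀ i k, B i k ≤ β := by
    intro i k
    have h1 : B i k ≤ univ.sup' hne (B i) := le_sup' (B i) (mem_univ k)
    have h2 : univ.sup' hne (B i) ≤ β :=
      le_sup' (fun i => univ.sup' hne (B i)) (mem_univ i)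
    exact le_trans h1 h2
  have hεβ : ε ≤ β := by
    obtain ⟨i0, _⟩ := hne
    exact le_trans (hεle i0 i0) (hβge i0 i0)
  have hrow : ∀ i, ∑ k, B i k = 1 := by
    intro i
    have hAvi : ∑ k, A i k * v k = r * v i := by
      have := congrFun hAv i
      simpa [Matrix.mulVec, dotProduct] using this
    calc ∑ k, B i k = (∑ k, A i k * v k) / (r * v i) := by
          rw [sum_div]
      _ = 1 := by
          rw [hAvi]
          exact div_self (ne_of_gt (mul_pos hr (hv i)))
  have hq : 0 ≤ 1 - (d : ℝ) * ε := by
    obtain ⟨i0, _⟩ := hne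
    have h1 : (d : ℝ) * ε ≤ ∑ k, B i0 k := by
      calc (d : ℝ) * ε = ∑ _k : Fin d, ε := by
            rw [sum_const, card_univ, Fintype.card_fin, nsmul_eq_mul]
        _ ≤ ∑ k, B i0 k := sum_le_sum fun k _ => hεle i0 k
    rw [hrow i0] at h1
    linarith
  set q : ℝ := 1 - (d : ℝ) * ε with hqdef
  have hq1 : q < 1 := by
    have hd' : (0:ℝ) < (d:ℝ) := by exact_mod_cast hd
    have := mul_pos hd' hεpos
    rw [hqdef]
    linarith
  set y : Fin d → ℝ := fun i => x i / v i with hy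
  have hxy : ∀ i, x i = v i * y i := fun i => by
    rw [hy]
    exact (mul_div_cancel₀ _ (ne_of_gt (hv i))).symm
  have hosc : ∀ n : ℕ, univ.sup' hne y - univ.inf' hne y
      ≤ q ^ n * ((β / ε) * univ.sup' hne y) := by
    intro n
    obtain ⟨u, hu, hux⟩ := hx n
    set w : Fin d → ℝ := fun k => u k / v k with hw
    have hw0 : ∀ k, 0 ≤ w k := fun k => div_nonneg (hu k) (hv k).le
    have huvw : u = fun k => v k * w k := funext fun k => by
      rw [hw]
      exact (mul_div_cancel₀ _ (ne_of_gt (hv k))).symm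
    have hyeq : ∀ i, y i = r ^ (n+1) * (B ^ (n+1)).mulVec w i := by
      intro i
      have hcp := congrFun (myConjPow d A B v r hv hr hB (n+1) w) i
      rw [← huvw, hux] at hcp
      have hvi := (hv i).ne'
      show x i / v i = r ^ (n + 1) * (B ^ (n + 1)).mulVec w i
      rw [hcp]
      field_simp
    set z : Fin d → ℝ := B.mulVec w with hz
    have hzn : (B ^ (n+1)).mulVec w = (B ^ n).mulVec z := by
      rw [hz, Matrix.mulVec_mulVec, ← pow_succ]
    set S : ℝ := ∑ k, w k with hS
    have hS0 : 0 ≤ S := sum_nonneg fun k _ => hw0 k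
    have hzlow : ∀ i, ε * S ≤ z i := by
      intro i
      calc ε * S = ∑ k, ε * w k := by rw [hS, mul_sum]
        _ ≤ ∑ k, B i k * w k :=
            sum_le_sum fun k _ => mul_le_mul_of_nonneg_right (hεle i k) (hw0 k)
        _ = z i := rfl
    have hzhigh : ∀ i, z i ≤ β * S := by
      intro i
      calc z i = ∑ k, B i k * w k := rfl
        _ ≤ ∑ k, β * w k :=
            sum_le_sum fun k _ => mul_le_mul_of_nonneg_right (hβge i k) (hw0 k)
        _ = β * S := by rw [hS, mul_sum]
    have hrp : (0:ℝ) < r ^ (n+1) := pow_pos hr (n+1)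
    -- oscillation of y
    obtain ⟨i₁, _, hi₁⟩ := exists_mem_eq_sup' hne y
    obtain ⟨i₂, _, hi₂⟩ := exists_mem_eq_inf' hne y
    have h1 : univ.sup' hne y - univ.inf' hne y
        ≤ r ^ (n+1) * (univ.sup' hne ((B ^ n).mulVec z) - univ.inf' hne ((B ^ n).mulVec z)) := by
      rw [hi₁, hi₂, hyeq i₁, hyeq i₂, hzn]
      have ha : (B ^ n).mulVec z i₁ ≤ univ.sup' hne ((B ^ n).mulVec z) :=
        le_sup' _ (mem_univ i₁)
      have hb : univ.inf' hne ((B ^ n).mulVec z) ≤ (B ^ n).mulVec z i₂ :=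
        inf'_le _ (mem_univ i₂)
      nlinarith
    have h2 := dobrushin_iter hne B ε hεle hεpos.le hrow hq n z
    have h3 := (stoch_iter_bounds hne B ε hεle hεpos.le hrow n z).1
    -- sup' y ≥ r^(n+1) * inf' z ≥ r^(n+1) * ε * S ≥ 0
    have h4 : r ^ (n+1) * univ.inf' hne z ≤ univ.sup' hne y := by
      rw [hi₁, hyeq i₁, hzn]
      have : univ.inf' hne z ≤ (B ^ n).mulVec z i₁ :=
        le_trans h3 (inf'_le _ (mem_univ i₁))
      nlinarith
    have h5 : ε * S ≤ univ.inf' hne z := le_inf' hne z fun i _ => hzlow i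
    have h6 : univ.sup' hne z ≤ β * S := sup'_le hne z fun i _ => hzhigh i
    have hqn : (0:ℝ) ≤ q ^ n := pow_nonneg hq n
    -- chain
    have h7 : univ.sup' hne z - univ.inf' hne z ≤ (β - ε) * S := by
      have := h5; have := h6; linarith
    have h8 : univ.sup' hne y - univ.inf' hne y ≤ q ^ n * (r ^ (n+1) * ((β - ε) * S)) := by
      calc univ.sup' hne y - univ.inf' hne y
          ≤ r ^ (n+1) * (univ.sup' hne ((B ^ n).mulVec z)
              - univ.inf' hne ((B ^ n).mulVec z)) := h1
        _ ≤ r ^ (n+1) * (q ^ n * (univ.sup' hne z - univ.inf' hne z)) :=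
            mul_le_mul_of_nonneg_left h2 hrp.le
        _ ≤ r ^ (n+1) * (q ^ n * ((β - ε) * S)) :=
            mul_le_mul_of_nonneg_left (mul_le_mul_of_nonneg_left h7 hqn) hrp.le
        _ = q ^ n * (r ^ (n+1) * ((β - ε) * S)) := by ring
    have h9 : r ^ (n+1) * ((β - ε) * S) ≤ (β / ε) * univ.sup' hne y := by
      have ha : r ^ (n+1) * (ε * S) ≤ univ.sup' hne y := by
        calc r ^ (n+1) * (ε * S) ≤ r ^ (n+1) * univ.inf' hne z :=
              mul_le_mul_of_nonneg_left h5 hrp.le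
          _ ≤ univ.sup' hne y := h4
      have hβε : 0 ≤ β / ε := div_nonneg (le_trans hεpos.le hεβ) hεpos.le
      calc r ^ (n+1) * ((β - ε) * S) ≤ r ^ (n+1) * (β * S) :=
            mul_le_mul_of_nonneg_left
              (by nlinarith [mul_nonneg hεpos.le hS0]) hrp.le
        _ = (β / ε) * (r ^ (n+1) * (ε * S)) := by
            field_simp
        _ ≤ (β / ε) * univ.sup' hne y := mul_le_mul_of_nonneg_left ha hβε
    calc univ.sup' hne y - univ.inf' hne y ≤ q ^ n * (r ^ (n+1) * ((β - ε) * S)) := h8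
      _ ≤ q ^ n * ((β / ε) * univ.sup' hne y) := mul_le_mul_of_nonneg_left h9 hqn
  -- limit
  have htend : Filter.Tendsto (fun n : ℕ => q ^ n * ((β / ε) * univ.sup' hne y))
      Filter.atTop (nhds 0) := by
    have h0 : Filter.Tendsto (fun n : ℕ => q ^ n) Filter.atTop (nhds 0) :=
      tendsto_pow_atTop_nhds_zero_of_lt_one hq hq1
    simpa using h0.mul_const ((β / ε) * univ.sup' hne y)
  have hosc0 : univ.sup' hne y - univ.inf' hne y ≤ 0 := ge_of_tendsto' htend hosc
  have hoscge : univ.inf' hne y ≤ univ.sup' hne y := by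
    obtain ⟨k0, _⟩ := hne
    exact le_trans (inf'_le y (mem_univ k0)) (le_sup' y (mem_univ k0))
  have heq : univ.sup' hne y = univ.inf' hne y := le_antisymm (by linarith) hoscge
  refine ⟨univ.inf' hne y, funext fun i => ?_⟩
  have hyc : y i = univ.inf' hne y := by
    have h1 : y i ≤ univ.sup' hne y := le_sup' y (mem_univ i)
    have h2 : univ.inf' hne y ≤ y i := inf'_le y (mem_univ i)
    rw [heq] at h1
    linarith
  rw [hxy i, hyc]
  simp only [Pi.smul_apply, smul_eq_mul]
  ring


/-- For a strictly positive `d × d` matrix `A`, the intersection over `n ≥ 1`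
of the images `Aⁿ(C)` of the positive-and-negative cone `C` is exactly the line spanned by
the Perron–Frobenius eigenvector of `A` (the unique up to scale eigenvector with strictly
positive entries). -/
theorem stmt3 (d : ℕ) (hd : 1 ≤ d) (A : Matrix (Fin d) (Fin d) ℝ)
    (hA : ∀ i j, 0 < A i j) :
    ∃ v : Fin d → ℝ, (∀ i, 0 < v i) ∧ (∃ μ : ℝ, A.mulVec v = μ • v) ∧
      (∀ w : Fin d → ℝ, (∀ i, 0 < w i) → (∃ μ : ℝ, A.mulVec w = μ • w) →
        ∃ c : ℝ, 0 < c ∧ w = c • v) ∧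
      (⋂ n : ℕ, (fun w => (A ^ (n + 1)).mulVec w) ''
          {w : Fin d → ℝ | (∀ i, 0 ≤ w i) ∨ (∀ i, w i ≤ 0)})
        = ↑(Submodule.span ℝ {v}) := by
  obtain ⟨v, r, hv, hr, hAv⟩ := perron_exists d hd A hA
  refine ⟨v, hv, ⟨r, hAv⟩, ?_, ?_⟩
  · rintro w hw ⟨μ, hAw⟩
    exact perron_unique d hd A hA v r hv hAv w μ hw hAw
  · have hpownn := pow_entries_nonneg A (fun i j => (hA i j).le)
    have hpowv : ∀ m : ℕ, (A ^ m).mulVec v = r ^ m • v := by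
      intro m
      induction m with
      | zero => simp [Matrix.one_mulVec]
      | succ m ih =>
        have hstep : (A ^ (m + 1)).mulVec v = A.mulVec ((A ^ m).mulVec v) := by
          rw [pow_succ', ← Matrix.mulVec_mulVec]
        rw [hstep, ih, Matrix.mulVec_smul, hAv, smul_smul, ← pow_succ]
    ext x
    simp only [Set.mem_iInter, Set.mem_image, Set.mem_setOf_eq, SetLike.mem_coe,
      Submodule.mem_span_singleton]
    constructor
    · intro hmem
      by_cases hx0 : x = 0
      · exact ⟨0, by simp [hx0]⟩
      · have hex : ∃ i₀, x i₀ ≠ 0 := by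
          by_contra hno; push_neg at hno
          exact hx0 (funext hno)
        obtain ⟨i₀, hi₀⟩ := hex
        rcases lt_or_gt_of_ne hi₀ with hneg | hpos
        · have hxs : ∀ n : ℕ, ∃ u : Fin d → ℝ,
              (∀ k, 0 ≤ u k) ∧ (A ^ (n + 1)).mulVec u = -x := by
            intro n
            obtain ⟨u, hu, hux⟩ := hmem n
            rcases hu with hupos | huneg
            · exfalso
              have h := mulVec_nonneg (A ^ (n + 1)) (hpownn (n + 1)) u hupos i₀
              rw [hux] at h
              linarith
            · refine ⟨-u, fun k => by simpa using huneg k, ?_⟩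
              rw [Matrix.mulVec_neg, hux]
          obtain ⟨c, hc⟩ := inter_sub d hd A hA v r hv hr hAv (-x) hxs
          refine ⟨-c, ?_⟩
          have h2 := congrArg Neg.neg hc
          simp only [neg_neg] at h2
          rw [h2, neg_smul]
        · have hxs : ∀ n : ℕ, ∃ u : Fin d → ℝ,
              (∀ k, 0 ≤ u k) ∧ (A ^ (n + 1)).mulVec u = x := by
            intro n
            obtain ⟨u, hu, hux⟩ := hmem n
            rcases hu with hupos | huneg
            · exact ⟨u, hupos, hux⟩
            · exfalso
              have h := mulVec_nonpos (A ^ (n + 1)) (hpownn (n + 1)) u huneg i₀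
              rw [hux] at h
              linarith
          obtain ⟨c, hc⟩ := inter_sub d hd A hA v r hv hr hAv x hxs
          exact ⟨c, hc.symm⟩
    · rintro ⟨t, ht⟩
      intro n
      refine ⟨(t / r ^ (n + 1)) • v, ?_, ?_⟩
      · rcases le_or_gt 0 t with h | h
        · left
          intro i
          simp only [Pi.smul_apply, smul_eq_mul]
          exact mul_nonneg (div_nonneg h (pow_pos hr _).le) (hv i).le
        · right
          intro i
          simp only [Pi.smul_apply, smul_eq_mul]
          exact mul_nonpos_of_nonpos_of_nonneg
            (div_nonpos_of_nonpos_of_nonneg h.le (pow_pos hr _).le) (hv i).le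
      · rw [Matrix.mulVec_smul, hpowv (n + 1), smul_smul,
          div_mul_cancel₀ _ (ne_of_gt (pow_pos hr (n + 1)))]
        exact ht
end

section
/- Let N = (n_0, n_1, …) be a sequence of positive integers, let α = [n_0; n_1, n_2, …] be the value of the infinite continued fraction, and let M_k = [[n_k, 1],[1, 0]]. Then the intersection over all k of the images (M_0 M_1 ⋯ M_k)(C), where C ⊂ ℝ² is the set of vectors with both entries of the same sign, equals the line spanned by (α, 1). -/
open Filter

/-- Continued fraction convergent numerators (shifted indexing: `cfP a (k+2) = p_k`). -/
def cfP (a : ℕ → ℤ) : ℕ → ℤ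
  | 0 => 0
  | 1 => 1
  | (k + 2) => a k * cfP a (k + 1) + cfP a k

/-- Continued fraction convergent denominators (shifted indexing: `cfQ a (k+2) = q_k`). -/
def cfQ (a : ℕ → ℤ) : ℕ → ℤ
  | 0 => 1
  | 1 => 0
  | (k + 2) => a k * cfQ a (k + 1) + cfQ a k

lemma cfP_rec (n : ℕ → ℤ) (k : ℕ) : cfP n (k+2) = n k * cfP n (k+1) + cfP n k := rfl
lemma cfQ_rec (n : ℕ → ℤ) (k : ℕ) : cfQ n (k+2) = n k * cfQ n (k+1) + cfQ n k := rfl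

lemma cfQ_nonneg (n : ℕ → ℤ) (hn : ∀ i, 0 < n i) : ∀ k, 0 ≤ cfQ n k ∧ 0 ≤ cfQ n (k + 1)
  | 0 => ⟨by simp [cfQ], by simp [cfQ]⟩
  | (k+1) => by
    obtain ⟨h1, h2⟩ := cfQ_nonneg n hn k
    refine ⟨h2, ?_⟩
    have := hn k
    rw [show k+1+1 = k+2 from rfl, cfQ_rec n k]
    nlinarith

lemma cfQ_pos (n : ℕ → ℤ) (hn : ∀ i, 0 < n i) : ∀ k, 0 < cfQ n (k + 2) ∧ 0 < cfQ n (k + 3)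
  | 0 => by
    constructor
    · simp [cfQ]
    · have := hn 1
      simp [cfQ]; omega
  | (k+1) => by
    obtain ⟨h1, h2⟩ := cfQ_pos n hn k
    refine ⟨h2, ?_⟩
    have := hn (k+2)
    rw [show k+1+3 = (k+2)+2 from rfl, cfQ_rec n (k+2)]
    nlinarith

lemma cfDet (n : ℕ → ℤ) : ∀ k, cfP n (k+1) * cfQ n k - cfP n k * cfQ n (k+1) = (-1)^k
  | 0 => by simp [cfP, cfQ]
  | (k+1) => by
    have ih := cfDet n k
    rw [show k+1+1 = k+2 from rfl, cfP_rec n k, cfQ_rec n k]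
    linear_combination (-1 : ℤ) * ih

lemma cfE (n : ℕ → ℤ) (k : ℕ) :
    cfP n (k+4) * cfQ n (k+2) - cfP n (k+2) * cfQ n (k+4) = n (k+2) * (-1)^k := by
  have h := cfDet n (k+2)
  rw [show (k+4 : ℕ) = (k+2)+2 from rfl, cfP_rec n (k+2), cfQ_rec n (k+2)]
  linear_combination n (k+2) * h

lemma prodMat (n : ℕ → ℤ) : ∀ k, ((List.range (k + 1)).map (fun i => !![(n i : ℝ), 1; 1, 0])).prod
    = !![(cfP n (k+2) : ℝ), (cfP n (k+1) : ℝ); (cfQ n (k+2) : ℝ), (cfQ n (k+1) : ℝ)]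
  | 0 => by
    norm_num [List.range_succ, cfP_rec, cfQ_rec, cfP, cfQ]
  | (k+1) => by
    rw [List.range_succ, List.map_append, List.prod_append]
    simp only [List.map_cons, List.map_nil, List.prod_cons, List.prod_nil, mul_one]
    rw [prodMat n k, Matrix.mul_fin_two]
    rw [show k+1+2 = (k+1)+2 from rfl, cfP_rec n (k+1), cfQ_rec n (k+1)]
    push_cast
    ext i j
    fin_cases i <;> fin_cases j <;> simp <;> ring

lemma pairSign {a b : ℝ} (h : 0 ≤ a * b) : (0 ≤ a ∧ 0 ≤ b) ∨ (a ≤ 0 ∧ b ≤ 0) := by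
  rcases le_or_gt 0 a with ha | ha
  · rcases le_or_gt 0 b with hb | hb
    · exact Or.inl ⟨ha, hb⟩
    · refine Or.inr ⟨?_, hb.le⟩; nlinarith
  · refine Or.inr ⟨ha.le, ?_⟩; nlinarith

lemma resid_sign (n : ℕ → ℤ) (hn : ∀ i, 0 < n i) (α : ℝ)
    (hα : Tendsto (fun k => (cfP n (k + 2) : ℝ) / (cfQ n (k + 2) : ℝ)) atTop (nhds α)) (k : ℕ) :
    0 ≤ (-1:ℝ)^k * ((cfQ n (k+2):ℝ) * α - (cfP n (k+2):ℝ)) := by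
  set r : ℕ → ℝ := fun k => (cfP n (k + 2) : ℝ) / (cfQ n (k + 2) : ℝ) with hr
  have hQ : ∀ j, (0:ℝ) < (cfQ n (j+2) : ℝ) := fun j => by exact_mod_cast (cfQ_pos n hn j).1
  have hstep : ∀ j, Even j → r j ≤ r (j+2) := by
    intro j hj
    rw [hr]
    simp only
    rw [div_le_div_iff₀ (hQ j) (hQ (j+2))]
    have hE := cfE n j
    rw [hj.neg_one_pow, mul_one] at hE
    have h2 : cfP n (j+2) * cfQ n (j+4) ≤ cfP n (j+4) * cfQ n (j+2) := by
      have := hn (j+2); omega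
    exact_mod_cast h2
  have hstep' : ∀ j, Odd j → r (j+2) ≤ r j := by
    intro j hj
    rw [hr]
    simp only
    rw [div_le_div_iff₀ (hQ (j+2)) (hQ j)]
    have hE := cfE n j
    rw [hj.neg_one_pow, mul_neg_one] at hE
    have h2 : cfP n (j+4) * cfQ n (j+2) ≤ cfP n (j+2) * cfQ n (j+4) := by
      have := hn (j+2); omega
    exact_mod_cast h2
  have hsub : ∀ j, Tendsto (fun m => r (j + 2*m)) atTop (nhds α) := by
    intro j
    exact hα.comp (tendsto_atTop_atTop.mpr (fun b => ⟨b, fun a ha => by omega⟩))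
  rcases Nat.even_or_odd k with hk | hk
  · have mono : ∀ m, r k ≤ r (k + 2*m) := by
      intro m; induction m with
      | zero => simp
      | succ m ih =>
        have he : Even (k + 2*m) := by rcases hk with ⟨t,ht⟩; exact ⟨t+m, by omega⟩
        rw [show k+2*(m+1) = (k+2*m)+2 by ring]
        exact le_trans ih (hstep _ he)
    have hle : r k ≤ α := ge_of_tendsto' (hsub k) mono
    rw [hk.neg_one_pow, one_mul]
    rw [hr] at hle
    simp only at hle
    rw [div_le_iff₀ (hQ k)] at hle
    nlinarith
  · have mono : ∀ m, r (k + 2*m) ≤ r k := by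
      intro m; induction m with
      | zero => simp
      | succ m ih =>
        have he : Odd (k + 2*m) := by rcases hk with ⟨t,ht⟩; exact ⟨t+m, by omega⟩
        rw [show k+2*(m+1) = (k+2*m)+2 by ring]
        exact le_trans (hstep' _ he) ih
    have hle : α ≤ r k := le_of_tendsto' (hsub k) mono
    rw [hk.neg_one_pow]
    rw [hr] at hle
    simp only at hle
    rw [le_div_iff₀ (hQ k)] at hle
    nlinarith


/-- For a sequence `N = (n_0, n_1, …)` of positive integers with continued
fraction value `α = [n_0; n_1, n_2, …]` and `M_k = [[n_k, 1], [1, 0]]`, the intersection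
over `k` of the images `(M_0 ⋯ M_k)(C)` of the positive-and-negative cone `C ⊆ ℝ²`
is the line spanned by `(α, 1)`. -/
theorem stmt5 (n : ℕ → ℤ) (hn : ∀ i, 0 < n i) (α : ℝ)
    (hα : Tendsto (fun k => (cfP n (k + 2) : ℝ) / (cfQ n (k + 2) : ℝ)) atTop (nhds α)) :
    (⋂ k : ℕ, (fun v => (((List.range (k + 1)).map
          (fun i => !![(n i : ℝ), 1; 1, 0])).prod).mulVec v) ''
        {v : Fin 2 → ℝ | (∀ i, 0 ≤ v i) ∨ (∀ i, v i ≤ 0)})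
      = ↑(Submodule.span ℝ {![α, 1]}) := by
  have hQ : ∀ j, (0:ℝ) < (cfQ n (j+2) : ℝ) := fun j => by exact_mod_cast (cfQ_pos n hn j).1
  ext v
  simp only [Set.mem_iInter, Set.mem_image, Set.mem_setOf_eq, SetLike.mem_coe,
    Submodule.mem_span_singleton]
  constructor
  · intro h
    set r : ℕ → ℝ := fun k => (cfP n (k + 2) : ℝ) / (cfQ n (k + 2) : ℝ) with hr
    have hsq : ∀ k : ℕ, ((-1:ℝ)^k) * ((-1:ℝ)^k) = 1 := by
      intro k; rw [← pow_add]; exact Even.neg_one_pow ⟨k, rfl⟩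
    have key : ∀ k, (v 0 - r k * v 1) * (v 0 - r (k+1) * v 1) ≤ 0 := by
      intro k
      obtain ⟨u, hu, huv⟩ := h (k+1)
      rw [prodMat n (k+1)] at huv
      have h0 := congrFun huv 0
      have h1 := congrFun huv 1
      simp [Matrix.mulVec, dotProduct, Fin.sum_univ_two] at h0 h1
      have hu01 : 0 ≤ u 0 * u 1 := by
        rcases hu with h' | h'
        exacts [mul_nonneg (h' 0) (h' 1), by nlinarith [h' 0, h' 1]]
      have hD := cfDet n (k+2)
      rw [show ((-1:ℤ))^(k+2) = (-1)^k by ring] at hD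
      have hDR : (cfP n (k+1+2):ℝ) * (cfQ n (k+2):ℝ) - (cfP n (k+2):ℝ) * (cfQ n (k+1+2):ℝ)
          = (-1)^k := by exact_mod_cast hD
      have e2 : (cfQ n (k+2):ℝ) * v 0 - (cfP n (k+2):ℝ) * v 1 = (-1)^k * u 0 := by
        linear_combination (-(cfQ n (k+2):ℝ)) * h0 + (cfP n (k+2):ℝ) * h1 + u 0 * hDR
      have e3 : (cfQ n (k+1+2):ℝ) * v 0 - (cfP n (k+1+2):ℝ) * v 1 = -(-1:ℝ)^k * u 1 := by
        linear_combination (-(cfQ n (k+1+2):ℝ)) * h0 + (cfP n (k+1+2):ℝ) * h1 - u 1 * hDR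
      have hprod : ((cfQ n (k+2):ℝ) * v 0 - (cfP n (k+2):ℝ) * v 1)
          * ((cfQ n (k+1+2):ℝ) * v 0 - (cfP n (k+1+2):ℝ) * v 1) ≤ 0 := by
        rw [e2, e3]
        have : ((-1:ℝ)^k * u 0) * (-(-1:ℝ)^k * u 1) = -(u 0 * u 1) := by
          linear_combination (-(u 0 * u 1)) * hsq k
        rw [this]; linarith
      have h2 : (cfQ n (k+2):ℝ) * (v 0 - r k * v 1)
          = (cfQ n (k+2):ℝ) * v 0 - (cfP n (k+2):ℝ) * v 1 := by
        rw [hr]; have hne := (hQ k).ne'; field_simp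
      have h3 : (cfQ n (k+1+2):ℝ) * (v 0 - r (k+1) * v 1)
          = (cfQ n (k+1+2):ℝ) * v 0 - (cfP n (k+1+2):ℝ) * v 1 := by
        rw [hr]; have hne := (hQ (k+1)).ne'; field_simp
      rw [← h2, ← h3] at hprod
      nlinarith [hprod, mul_pos (hQ k) (hQ (k+1))]
    have h1 : Tendsto (fun k => v 0 - r k * v 1) atTop (nhds (v 0 - α * v 1)) :=
      tendsto_const_nhds.sub (hα.mul_const _)
    have h2 : Tendsto (fun k => v 0 - r (k+1) * v 1) atTop (nhds (v 0 - α * v 1)) :=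
      h1.comp (tendsto_add_atTop_nat 1)
    have hle : (v 0 - α * v 1) * (v 0 - α * v 1) ≤ 0 :=
      le_of_tendsto (h1.mul h2) (Eventually.of_forall key)
    have hv0 : v 0 = α * v 1 := by nlinarith
    refine ⟨v 1, ?_⟩
    funext i
    fin_cases i <;> simp [hv0, mul_comm]
  · rintro ⟨c, rfl⟩ k
    have hsq : ((-1:ℝ)^k) * ((-1:ℝ)^k) = 1 := by
      rw [← pow_add]; exact Even.neg_one_pow ⟨k, rfl⟩
    have hA : 0 ≤ (-1:ℝ)^k * ((cfQ n (k+2):ℝ) * α - (cfP n (k+2):ℝ)) :=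
      resid_sign n hn α hα k
    have hB : (-1:ℝ)^k * ((cfQ n (k+1):ℝ) * α - (cfP n (k+1):ℝ)) ≤ 0 := by
      cases k with
      | zero => norm_num [cfP, cfQ]
      | succ m =>
        have := resid_sign n hn α hα m
        rw [pow_succ]
        nlinarith
    refine ⟨![(-1:ℝ)^(k+1) * c * ((cfQ n (k+1):ℝ) * α - (cfP n (k+1):ℝ)),
        (-1:ℝ)^k * c * ((cfQ n (k+2):ℝ) * α - (cfP n (k+2):ℝ))], ?_, ?_⟩
    · have hmul : 0 ≤ ((-1:ℝ)^(k+1) * c * ((cfQ n (k+1):ℝ) * α - (cfP n (k+1):ℝ)))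
          * ((-1:ℝ)^k * c * ((cfQ n (k+2):ℝ) * α - (cfP n (k+2):ℝ))) := by
        have hab := mul_nonpos_of_nonpos_of_nonneg hB hA
        have hid : ((-1:ℝ)^(k+1) * c * ((cfQ n (k+1):ℝ) * α - (cfP n (k+1):ℝ)))
            * ((-1:ℝ)^k * c * ((cfQ n (k+2):ℝ) * α - (cfP n (k+2):ℝ)))
            = -(c*c) * ((-1:ℝ)^k * ((cfQ n (k+1):ℝ) * α - (cfP n (k+1):ℝ))
              * ((-1:ℝ)^k * ((cfQ n (k+2):ℝ) * α - (cfP n (k+2):ℝ)))) := by ring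
        rw [hid]
        nlinarith [mul_self_nonneg c, hab]
      rcases pairSign hmul with ⟨ha, hb⟩ | ⟨ha, hb⟩
      · left; intro i; fin_cases i <;> simpa
      · right; intro i; fin_cases i <;> simpa
    · rw [prodMat n k]
      have hD := cfDet n (k+1)
      have hDR : (cfP n (k+2):ℝ) * (cfQ n (k+1):ℝ) - (cfP n (k+1):ℝ) * (cfQ n (k+2):ℝ)
          = (-1)^(k+1) := by exact_mod_cast hD
      funext i
      fin_cases i
      · simp only [Matrix.mulVec, dotProduct, Fin.sum_univ_two, Fin.isValue,
          Matrix.cons_val', Matrix.cons_val_zero, Matrix.cons_val_one, Matrix.head_cons,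
          Matrix.head_fin_const, Matrix.empty_val', Matrix.cons_val_fin_one, Pi.smul_apply,
          smul_eq_mul, Matrix.cons_val_one, Matrix.head_cons]
        show (cfP n (k+2):ℝ) * ((-1:ℝ)^(k+1) * c * ((cfQ n (k+1):ℝ) * α - (cfP n (k+1):ℝ)))
            + (cfP n (k+1):ℝ) * ((-1:ℝ)^k * c * ((cfQ n (k+2):ℝ) * α - (cfP n (k+2):ℝ)))
            = c * α
        linear_combination (-((-1:ℝ)^k) * c * α) * hDR + (c*α) * hsq
      · simp only [Matrix.mulVec, dotProduct, Fin.sum_univ_two, Fin.isValue,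
          Matrix.cons_val', Matrix.cons_val_zero, Matrix.cons_val_one, Matrix.head_cons,
          Matrix.head_fin_const, Matrix.empty_val', Matrix.cons_val_fin_one, Pi.smul_apply,
          smul_eq_mul]
        show (cfQ n (k+2):ℝ) * ((-1:ℝ)^(k+1) * c * ((cfQ n (k+1):ℝ) * α - (cfP n (k+1):ℝ)))
            + (cfQ n (k+1):ℝ) * ((-1:ℝ)^k * c * ((cfQ n (k+2):ℝ) * α - (cfP n (k+2):ℝ)))
            = c * 1
        linear_combination (-((-1:ℝ)^k) * c) * hDR + c * hsq
end

section
/- Two irrational real numbers α and β have continued fraction expansions sharing a common tail (i.e., there exist k, ℓ with a_{k+i} = b_{ℓ+i} for all i ≥ 1, where (a_i), (b_i) are their continued fraction coefficient sequences) if and only if there is a matrix [[a, b],[c, d]] ∈ GL(2, ℤ) (integer entries, determinant ±1) with β = (aα + b)/(cα + d). -/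
open Filter

namespace HW174

def shf (a : ℕ → ℤ) (k : ℕ) : ℕ → ℤ := fun i => a (k + i)

lemma shf_shf (a : ℕ → ℤ) (k l : ℕ) : shf (shf a k) l = shf a (k + l) := by
  funext i; simp [shf, Nat.add_assoc]

lemma cfP_congr {a b : ℕ → ℤ} : ∀ n, (∀ i, i + 2 ≤ n → a i = b i) → cfP a n = cfP b n
  | 0, _ => rfl
  | 1, _ => rfl
  | (n+2), h => by
      rw [cfP, cfP, h n (le_refl _), cfP_congr (n+1) (fun i hi => h i (by omega)),
        cfP_congr n (fun i hi => h i (by omega))]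

lemma cfQ_congr {a b : ℕ → ℤ} : ∀ n, (∀ i, i + 2 ≤ n → a i = b i) → cfQ a n = cfQ b n
  | 0, _ => rfl
  | 1, _ => rfl
  | (n+2), h => by
      rw [cfQ, cfQ, h n (le_refl _), cfQ_congr (n+1) (fun i hi => h i (by omega)),
        cfQ_congr n (fun i hi => h i (by omega))]

lemma cfP_rec (a : ℕ → ℤ) (n : ℕ) : cfP a (n+2) = a n * cfP a (n+1) + cfP a n := rfl
lemma cfQ_rec (a : ℕ → ℤ) (n : ℕ) : cfQ a (n+2) = a n * cfQ a (n+1) + cfQ a n := rfl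

lemma cfQ_two (a : ℕ → ℤ) : cfQ a 2 = 1 := by simp [cfQ]
lemma cfP_one_eq (a : ℕ → ℤ) : cfP a 1 = 1 := rfl
lemma cfQ_one_eq (a : ℕ → ℤ) : cfQ a 1 = 0 := rfl
lemma cfP_two (a : ℕ → ℤ) : cfP a 2 = a 0 := by simp [cfP]
lemma cfP_three (a : ℕ → ℤ) : cfP a 3 = a 1 * a 0 + 1 := by simp [cfP, cfP_two]
lemma cfQ_three (a : ℕ → ℤ) : cfQ a 3 = a 1 := by simp [cfQ, cfQ_two]

section pos
variable {a : ℕ → ℤ} (ha : ∀ i, 1 ≤ i → 1 ≤ a i)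
include ha

lemma cfQ_nonneg : ∀ n, 0 ≤ cfQ a n
  | 0 => by simp [cfQ]
  | 1 => by simp [cfQ]
  | 2 => by simp [cfQ_two]
  | (n+3) => by
      rw [cfQ_rec a (n+1)]
      have h1 := cfQ_nonneg (n+2)
      have h2 := cfQ_nonneg (n+1)
      have := ha (n+1) (by omega)
      nlinarith

lemma cfQ_one_le : ∀ n, 1 ≤ cfQ a (n+2)
  | 0 => by simp [cfQ_two]
  | (n+1) => by
      show 1 ≤ cfQ a (n+3)
      rw [cfQ_rec a (n+1)]
      have h1 := cfQ_one_le n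
      have h2 := cfQ_nonneg ha (n+1)
      have := ha (n+1) (by omega)
      nlinarith

lemma cfQ_mono : ∀ n, cfQ a (n+1) ≤ cfQ a (n+2)
  | 0 => by simp [cfQ, cfQ_two]
  | (n+1) => by
      show cfQ a (n+2) ≤ cfQ a (n+3)
      rw [cfQ_rec a (n+1)]
      have h0 := cfQ_nonneg ha (n+2)
      have h2 := cfQ_nonneg ha (n+1)
      have := ha (n+1) (by omega)
      nlinarith

lemma cfQ_rec_ge (n : ℕ) : cfQ a (n+2) + cfQ a (n+1) ≤ cfQ a (n+3) := by
  rw [cfQ_rec a (n+1)]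
  have h1 := cfQ_one_le ha n
  have h2 := cfQ_nonneg ha (n+1)
  have := ha (n+1) (by omega)
  nlinarith

lemma cfQ_growth (n : ℕ) : ((n:ℤ)+1) ≤ cfQ a (n+2) + cfQ a (n+1) := by
  induction n with
  | zero => simp [cfQ, cfQ_two]
  | succ n ih =>
      show ((n:ℤ)+1+1) ≤ cfQ a (n+3) + cfQ a (n+2)
      have h2 := cfQ_rec_ge ha n
      have h3 := cfQ_one_le ha n
      omega

lemma cfQ_ge_half (n : ℕ) : ((n:ℤ)+1) ≤ 2 * cfQ a (n+2) := by
  have h1 := cfQ_growth ha n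
  have h2 := cfQ_mono ha n
  omega

lemma tendsto_cfQ : Tendsto (fun n => (cfQ a (n+2) : ℝ)) atTop atTop := by
  have hle : ∀ n : ℕ, ((n:ℝ)+1)/2 ≤ (cfQ a (n+2) : ℝ) := by
    intro n
    have := cfQ_ge_half ha n
    have : ((n:ℝ) + 1) ≤ 2 * (cfQ a (n+2) : ℝ) := by exact_mod_cast this
    linarith
  refine tendsto_atTop_mono hle ?_
  apply Tendsto.atTop_div_const (by norm_num)
  exact tendsto_atTop_add_const_right _ _ tendsto_natCast_atTop_atTop

end pos

lemma cfDet (a : ℕ → ℤ) : ∀ n, cfP a (n+1) * cfQ a n - cfP a n * cfQ a (n+1) = (-1)^n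
  | 0 => by simp [cfP, cfQ]
  | (n+1) => by
      have ih := cfDet a n
      rw [cfP_rec a n, cfQ_rec a n, pow_succ]
      ring_nf
      ring_nf at ih
      linarith [ih]

noncomputable def conv (a : ℕ → ℤ) (n : ℕ) : ℝ := (cfP a (n+2) : ℝ) / (cfQ a (n+2) : ℝ)

noncomputable def ewid (a : ℕ → ℤ) (n : ℕ) : ℝ := ((cfQ a (n+2) : ℝ) * (cfQ a (n+3) : ℝ))⁻¹

section pos2
variable {a : ℕ → ℤ} (ha : ∀ i, 1 ≤ i → 1 ≤ a i)
include ha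

lemma cfQ_pos_real (n : ℕ) : (0:ℝ) < (cfQ a (n+2) : ℝ) := by
  have := cfQ_one_le ha n; exact_mod_cast lt_of_lt_of_le zero_lt_one (by exact_mod_cast this)

lemma ewid_pos (n : ℕ) : 0 < ewid a n :=
  inv_pos.2 (mul_pos (cfQ_pos_real ha n) (cfQ_pos_real ha (n+1)))

lemma cfQ_mono_real (n : ℕ) : (cfQ a (n+2) : ℝ) ≤ (cfQ a (n+3) : ℝ) := by
  exact_mod_cast cfQ_mono ha (n+1)

lemma ewid_anti (n : ℕ) : ewid a (n+1) ≤ ewid a n := by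
  unfold ewid
  have h1 := cfQ_pos_real ha n
  have h2 := cfQ_pos_real ha (n+1)
  have h3 := cfQ_pos_real ha (n+2)
  have h4 := cfQ_mono_real ha n
  have h5 := cfQ_mono_real ha (n+1)
  have e1 : (0:ℝ) < (cfQ a (n+2):ℝ) * (cfQ a (n+3):ℝ) := mul_pos h1 h2
  have e2 : (cfQ a (n+2):ℝ) * (cfQ a (n+3):ℝ) ≤ (cfQ a (n+3):ℝ) * (cfQ a (n+4):ℝ) := by nlinarith
  exact inv_anti₀ e1 (by convert e2 using 3 <;> omega)

lemma ewid_antitone : Antitone (ewid a) :=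
  antitone_nat_of_succ_le (fun n => ewid_anti ha n)

lemma conv_succ_sub (n : ℕ) : conv a (n+1) - conv a n = (-1:ℝ)^n * ewid a n := by
  have hdet := cfDet a (n+2)
  have h1 := (cfQ_pos_real ha n).ne'
  have h2 := (cfQ_pos_real ha (n+1)).ne'
  have hdetR : (cfP a (n+3) : ℝ) * (cfQ a (n+2) : ℝ) - (cfP a (n+2) : ℝ) * (cfQ a (n+3) : ℝ)
      = (-1:ℝ)^n := by
    have : ((cfP a (n+3) * cfQ a (n+2) - cfP a (n+2) * cfQ a (n+3) : ℤ) : ℝ) = ((-1:ℤ)^(n+2) : ℝ) := by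
      exact_mod_cast congrArg (fun z : ℤ => (z : ℝ)) hdet
    push_cast at this
    rw [show (-1:ℝ)^(n+2) = (-1:ℝ)^n by ring] at this
    linarith
  have hdetR' : (cfP a (n+3) : ℝ) * (cfQ a (n+2) : ℝ) - (cfQ a (n+3) : ℝ) * (cfP a (n+2) : ℝ)
      = (-1:ℝ)^n := by linarith [hdetR]
  show (cfP a (n+3):ℝ)/(cfQ a (n+3):ℝ) - (cfP a (n+2):ℝ)/(cfQ a (n+2):ℝ)
      = (-1:ℝ)^n * ((cfQ a (n+2):ℝ)*(cfQ a (n+3):ℝ))⁻¹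
  rw [div_sub_div _ _ h2 h1, hdetR', div_eq_mul_inv, mul_comm ((cfQ a (n+3):ℝ)) _]

lemma windowG : ∀ g n, (-1:ℝ)^n * (conv a (n+g) - conv a n) ∈ Set.Icc 0 (ewid a n)
  | 0, n => by simp [le_of_lt (ewid_pos ha n)]
  | 1, n => by
      rw [conv_succ_sub ha n, ← mul_assoc, ← pow_add]
      have : (-1:ℝ)^(n+n) = 1 := by
        rw [← two_mul, pow_mul]; norm_num
      rw [this, one_mul]
      exact ⟨le_of_lt (ewid_pos ha n), le_refl _⟩
  | (g+2), n => by
      have h1 := windowG g (n+2)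
      have e1 : n + (g+2) = (n+2) + g := by omega
      rw [e1]
      have hsplit : conv a ((n+2)+g) - conv a n
          = (conv a ((n+2)+g) - conv a (n+2)) + (conv a (n+2) - conv a n) := by ring
      have h2 : conv a (n+2) - conv a n = (-1:ℝ)^n * (ewid a n - ewid a (n+1)) := by
        have s1 := conv_succ_sub ha n
        have s2 := conv_succ_sub ha (n+1)
        have : (-1:ℝ)^(n+1) = -(-1:ℝ)^n := by ring
        rw [this] at s2
        have : conv a (n+2) - conv a n = (conv a (n+2) - conv a (n+1)) + (conv a (n+1) - conv a n) := by ring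
        rw [this, s1, s2]; ring
      have hsq : (-1:ℝ)^(n+2) = (-1:ℝ)^n := by ring
      rw [hsq] at h1
      obtain ⟨h1a, h1b⟩ := h1
      have ha1 := ewid_anti ha n
      have ha2 := ewid_anti ha (n+1)
      constructor
      · rw [hsplit, mul_add, h2]
        have : (-1:ℝ)^n * ((-1:ℝ)^n * (ewid a n - ewid a (n+1))) = ewid a n - ewid a (n+1) := by
          rw [← mul_assoc, ← pow_add, show (-1:ℝ)^(n+n) = 1 by rw [← two_mul, pow_mul]; norm_num, one_mul]
        rw [this]
        linarith
      · rw [hsplit, mul_add, h2]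
        have : (-1:ℝ)^n * ((-1:ℝ)^n * (ewid a n - ewid a (n+1))) = ewid a n - ewid a (n+1) := by
          rw [← mul_assoc, ← pow_add, show (-1:ℝ)^(n+n) = 1 by rw [← two_mul, pow_mul]; norm_num, one_mul]
        rw [this]
        linarith [h1b, ewid_pos ha (n+2)]

lemma abs_conv_sub (n g : ℕ) : |conv a (n+g) - conv a n| ≤ ewid a n := by
  have h := windowG ha g n
  obtain ⟨h1, h2⟩ := h
  rcases Nat.even_or_odd n with he | ho
  · have : (-1:ℝ)^n = 1 := he.neg_one_pow
    rw [this, one_mul] at h1 h2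
    rw [abs_le]; constructor <;> linarith [ewid_pos ha n]
  · have : (-1:ℝ)^n = -1 := ho.neg_one_pow
    rw [this] at h1 h2
    rw [abs_le]; constructor <;> nlinarith [ewid_pos ha n]

lemma tendsto_ewid : Tendsto (ewid a) atTop (nhds 0) := by
  have h1 : ∀ n, ewid a n ≤ ((cfQ a (n+2) : ℝ))⁻¹ := by
    intro n
    unfold ewid
    have q2 := cfQ_pos_real ha n
    have q3 : (1:ℝ) ≤ (cfQ a (n+3) : ℝ) := by exact_mod_cast cfQ_one_le ha (n+1)
    exact inv_anti₀ q2 (by nlinarith)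
  exact squeeze_zero (fun n => le_of_lt (ewid_pos ha n)) h1
    (tendsto_cfQ ha).inv_tendsto_atTop

lemma cauchy_conv : CauchySeq (conv a) := by
  apply cauchySeq_of_le_tendsto_0 (ewid a) ?_ (tendsto_ewid ha)
  intro n m N hn hm
  rcases le_total n m with h | h
  · obtain ⟨g, rfl⟩ := Nat.exists_eq_add_of_le h
    rw [Real.dist_eq, abs_sub_comm]
    exact le_trans (abs_conv_sub ha n g) (ewid_antitone ha hn)
  · obtain ⟨g, rfl⟩ := Nat.exists_eq_add_of_le h
    rw [Real.dist_eq]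
    exact le_trans (abs_conv_sub ha m g) (ewid_antitone ha hm)

noncomputable def tval (a : ℕ → ℤ) : ℝ := limUnder atTop (conv a)

lemma tendsto_conv_tval : Tendsto (conv a) atTop (nhds (tval a)) :=
  (cauchy_conv ha).tendsto_limUnder

lemma window_lim {x : ℝ} (hx : Tendsto (conv a) atTop (nhds x)) (n : ℕ) :
    (-1:ℝ)^n * (x - conv a n) ∈ Set.Icc 0 (ewid a n) := by
  have htend : Tendsto (fun g => (-1:ℝ)^n * (conv a (n+g) - conv a n)) atTop
      (nhds ((-1:ℝ)^n * (x - conv a n))) := by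
    apply Tendsto.const_mul
    apply Tendsto.sub_const
    have : Tendsto (fun g : ℕ => n + g) atTop atTop := by
      simpa [Nat.add_comm] using tendsto_add_atTop_nat n
    exact hx.comp this
  exact isClosed_Icc.mem_of_tendsto htend (Eventually.of_forall (fun g => windowG ha g n))

lemma abs_lim_sub {x : ℝ} (hx : Tendsto (conv a) atTop (nhds x)) (n : ℕ) :
    |x - conv a n| ≤ ewid a n := by
  obtain ⟨h1, h2⟩ := window_lim ha hx n
  rcases Nat.even_or_odd n with he | ho
  · have : (-1:ℝ)^n = 1 := he.neg_one_pow
    rw [this, one_mul] at h1 h2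
    rw [abs_le]; constructor <;> linarith [ewid_pos ha n]
  · have : (-1:ℝ)^n = -1 := ho.neg_one_pow
    rw [this] at h1 h2
    rw [abs_le]; constructor <;> nlinarith [ewid_pos ha n]

lemma abs_lim_linear {x : ℝ} (hx : Tendsto (conv a) atTop (nhds x)) (n : ℕ) :
    |x * (cfQ a (n+2) : ℝ) - (cfP a (n+2) : ℝ)| ≤ ((cfQ a (n+3) : ℝ))⁻¹ := by
  have h := abs_lim_sub ha hx n
  have q2 := cfQ_pos_real ha n
  have q3 := cfQ_pos_real ha (n+1)
  have key : x * (cfQ a (n+2) : ℝ) - (cfP a (n+2) : ℝ) = (x - conv a n) * (cfQ a (n+2) : ℝ) := by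
    unfold conv; field_simp
  rw [key, abs_mul, abs_of_pos q2]
  calc |x - conv a n| * (cfQ a (n+2):ℝ) ≤ ewid a n * (cfQ a (n+2):ℝ) := by
        exact mul_le_mul_of_nonneg_right h (le_of_lt q2)
    _ = ((cfQ a (n+3) : ℝ))⁻¹ := by
        unfold ewid; field_simp

end pos2

section posall
variable {a : ℕ → ℤ} (ha : ∀ i, 1 ≤ a i)
include ha

lemma ha' : ∀ i, 1 ≤ i → 1 ≤ a i := fun i _ => ha i

lemma lim_window_first {x : ℝ} (hx : Tendsto (conv a) atTop (nhds x)) :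
    ((a 0 : ℝ)) ≤ x ∧ x ≤ (a 0 : ℝ) + 1 := by
  have h := window_lim (ha' ha) hx 0
  obtain ⟨h1, h2⟩ := h
  rw [pow_zero, one_mul] at h1 h2
  have hc0 : conv a 0 = (a 0 : ℝ) := by
    unfold conv
    rw [cfP_two, cfQ_two]
    simp
  have he0 : ewid a 0 ≤ 1 := by
    unfold ewid
    rw [cfQ_two, cfQ_three]
    have : (1:ℝ) ≤ (a 1 : ℝ) := by exact_mod_cast ha 1
    rw [Int.cast_one, one_mul]
    exact inv_le_one_of_one_le₀ this
  constructor
  · linarith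
  · linarith

end posall

lemma splitP (a : ℕ → ℤ) (k : ℕ) : ∀ n,
    cfP a (k+3+n) = cfP a (k+2) * cfP (shf a (k+1)) (n+2) + cfP a (k+1) * cfQ (shf a (k+1)) (n+2)
  | 0 => by
      have h0 : shf a (k+1) 0 = a (k+1) := by simp [shf]
      rw [show k+3+0 = (k+1)+2 by omega, cfP_rec a (k+1), cfP_two, cfQ_two, h0]
      ring
  | 1 => by
      have h0 : shf a (k+1) 0 = a (k+1) := by simp [shf]
      have h1 : shf a (k+1) 1 = a (k+2) := by unfold shf; congr 1
      rw [show k+3+1 = (k+2)+2 by omega, cfP_rec a (k+2), cfP_three, cfQ_three, h0, h1,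
        show (k+2)+1 = (k+1)+2 by omega, cfP_rec a (k+1)]
      ring
  | (n+2) => by
      have i1 := splitP a k (n+1)
      have i0 := splitP a k n
      have hc : shf a (k+1) (n+2) = a (k+n+3) := by unfold shf; congr 1; omega
      rw [show k+3+(n+2) = (k+n+3)+2 by omega, cfP_rec a (k+n+3),
        cfP_rec (shf a (k+1)) (n+2), cfQ_rec (shf a (k+1)) (n+2), hc,
        show (k+n+3)+1 = k+3+(n+1) by omega,
        show k+n+3 = k+3+n by omega, i1, i0]
      ring

lemma splitQ (a : ℕ → ℤ) (k : ℕ) : ∀ n,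
    cfQ a (k+3+n) = cfQ a (k+2) * cfP (shf a (k+1)) (n+2) + cfQ a (k+1) * cfQ (shf a (k+1)) (n+2)
  | 0 => by
      have h0 : shf a (k+1) 0 = a (k+1) := by simp [shf]
      rw [show k+3+0 = (k+1)+2 by omega, cfQ_rec a (k+1), cfP_two, cfQ_two, h0]
      ring
  | 1 => by
      have h0 : shf a (k+1) 0 = a (k+1) := by simp [shf]
      have h1 : shf a (k+1) 1 = a (k+2) := by unfold shf; congr 1
      rw [show k+3+1 = (k+2)+2 by omega, cfQ_rec a (k+2), cfP_three, cfQ_three, h0, h1,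
        show (k+2)+1 = (k+1)+2 by omega, cfQ_rec a (k+1)]
      ring
  | (n+2) => by
      have i1 := splitQ a k (n+1)
      have i0 := splitQ a k n
      have hc : shf a (k+1) (n+2) = a (k+n+3) := by unfold shf; congr 1; omega
      rw [show k+3+(n+2) = (k+n+3)+2 by omega, cfQ_rec a (k+n+3),
        cfP_rec (shf a (k+1)) (n+2), cfQ_rec (shf a (k+1)) (n+2), hc,
        show (k+n+3)+1 = k+3+(n+1) by omega,
        show k+n+3 = k+3+n by omega, i1, i0]
      ring

def consSeq (x : ℤ) (u : ℕ → ℤ) : ℕ → ℤ := fun i => Nat.casesOn i x u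

lemma shf_cons (x : ℤ) (u : ℕ → ℤ) : shf (consSeq x u) 1 = u := by
  funext i
  show consSeq x u (1 + i) = u i
  rw [Nat.add_comm]
  rfl

lemma cfP_cons (x : ℤ) (u : ℕ → ℤ) (n : ℕ) :
    cfP (consSeq x u) (n+3) = x * cfP u (n+2) + cfQ u (n+2) := by
  have h := splitP (consSeq x u) 0 n
  rw [shf_cons] at h
  rw [show n+3 = 0+3+n by omega, h, cfP_two]
  show x * cfP u (n + 2) + 1 * cfQ u (n+2) = _
  ring

lemma cfQ_cons (x : ℤ) (u : ℕ → ℤ) (n : ℕ) :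
    cfQ (consSeq x u) (n+3) = cfP u (n+2) := by
  have h := splitQ (consSeq x u) 0 n
  rw [shf_cons] at h
  rw [show n+3 = 0+3+n by omega, h, cfQ_two]
  show 1 * cfP u (n + 2) + 0 * cfQ u (n+2) = _
  ring

lemma div_div_helper (x y z : ℝ) (hz : z ≠ 0) : (x/z)/(y/z) = x/y := by
  rcases eq_or_ne y 0 with h | h
  · simp [h]
  · field_simp

lemma flt_lim {p q : ℕ → ℝ} {t : ℝ} (hpq : Tendsto (fun n => p n / q n) atTop (nhds t))
    (hq : Tendsto q atTop atTop) (P P' Q Q' : ℝ) (hden : Q * t + Q' ≠ 0) :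
    Tendsto (fun n => (P * p n + P' * q n)/(Q * p n + Q' * q n)) atTop
      (nhds ((P*t+P')/(Q*t+Q'))) := by
  have h1 : Tendsto (fun n => (P * (p n/q n) + P')/(Q * (p n/q n) + Q')) atTop
      (nhds ((P*t+P')/(Q*t+Q'))) :=
    Tendsto.div ((hpq.const_mul P).add_const P') ((hpq.const_mul Q).add_const Q') hden
  refine Tendsto.congr' ?_ h1
  filter_upwards [hq.eventually_gt_atTop 0] with n hn
  have hq0 : q n ≠ 0 := ne_of_gt hn
  have e1 : P * (p n / q n) + P' = (P * p n + P' * q n)/ q n := by field_simp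
  have e2 : Q * (p n / q n) + Q' = (Q * p n + Q' * q n)/ q n := by field_simp
  rw [e1, e2, div_div_helper _ _ _ hq0]

lemma irrational_of_flt {α t : ℝ} (hα : Irrational α) (P P' Q Q' : ℤ)
    (heq : α = ((P:ℝ) * t + (P':ℝ)) / ((Q:ℝ) * t + (Q':ℝ))) : Irrational t := by
  by_contra h
  rw [Irrational] at h
  push_neg at h
  obtain ⟨r, rfl⟩ := h
  exact hα ⟨((P:ℚ)*r + P')/((Q:ℚ)*r + Q'), by push_cast; rw [heq]⟩

section tailrel
variable {a : ℕ → ℤ} (ha : ∀ i, 1 ≤ i → 1 ≤ a i)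
include ha

lemma shf_pos (k : ℕ) : ∀ i, 1 ≤ shf a (k+1) i := fun i => ha (k+1+i) (by omega)

lemma tval_ge_one (k : ℕ) : (1:ℝ) ≤ tval (shf a (k+1)) := by
  have hb : ∀ i, 1 ≤ shf a (k+1) i := shf_pos ha k
  have ht := tendsto_conv_tval (fun i _ => hb i)
  have hw := lim_window_first hb ht
  have : (1:ℝ) ≤ ((shf a (k+1) 0 : ℤ) : ℝ) := by exact_mod_cast hb 0
  linarith [hw.1]

lemma tail_den_pos (k : ℕ) :
    0 < (cfQ a (k+2) : ℝ) * tval (shf a (k+1)) + (cfQ a (k+1) : ℝ) := by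
  have h1 := cfQ_pos_real ha k
  have h2 : (0:ℝ) ≤ (cfQ a (k+1) : ℝ) := by exact_mod_cast cfQ_nonneg ha (k+1)
  have h3 := tval_ge_one ha k
  nlinarith

lemma tail_eq {α : ℝ} (hconv : Tendsto (conv a) atTop (nhds α)) (k : ℕ) :
    α = ((cfP a (k+2) : ℝ) * tval (shf a (k+1)) + (cfP a (k+1) : ℝ)) /
        ((cfQ a (k+2) : ℝ) * tval (shf a (k+1)) + (cfQ a (k+1) : ℝ)) := by
  set b := shf a (k+1) with hbdef
  have hb : ∀ i, 1 ≤ b i := shf_pos ha k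
  have hb' : ∀ i, 1 ≤ i → 1 ≤ b i := fun i _ => hb i
  have ht : Tendsto (conv b) atTop (nhds (tval b)) := tendsto_conv_tval hb'
  have hq : Tendsto (fun n => (cfQ b (n+2) : ℝ)) atTop atTop := tendsto_cfQ hb'
  have hlim := flt_lim (p := fun n => (cfP b (n+2):ℝ)) (q := fun n => (cfQ b (n+2):ℝ))
    ht hq (cfP a (k+2) : ℝ) (cfP a (k+1) : ℝ) (cfQ a (k+2) : ℝ) (cfQ a (k+1) : ℝ)
    (ne_of_gt (tail_den_pos ha k))
  have hsub : Tendsto (fun n => conv a (k+1+n)) atTop (nhds α) := by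
    apply hconv.comp
    exact tendsto_atTop_mono (fun n => Nat.le_add_left n (k+1)) tendsto_id
  have heq : ∀ n, conv a (k+1+n)
      = ((cfP a (k+2):ℝ) * (cfP b (n+2):ℝ) + (cfP a (k+1):ℝ) * (cfQ b (n+2):ℝ)) /
        ((cfQ a (k+2):ℝ) * (cfP b (n+2):ℝ) + (cfQ a (k+1):ℝ) * (cfQ b (n+2):ℝ)) := by
    intro n
    unfold conv
    rw [show k+1+n+2 = k+3+n by omega]
    rw [splitP a k n, splitQ a k n]
    push_cast
    rfl
  rw [show (fun n => conv a (k+1+n)) = (fun n =>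
      ((cfP a (k+2):ℝ) * (cfP b (n+2):ℝ) + (cfP a (k+1):ℝ) * (cfQ b (n+2):ℝ)) /
        ((cfQ a (k+2):ℝ) * (cfP b (n+2):ℝ) + (cfQ a (k+1):ℝ) * (cfQ b (n+2):ℝ))) from
    funext heq] at hsub
  exact tendsto_nhds_unique hsub hlim

lemma tval_irrational {α : ℝ} (hα : Irrational α)
    (hconv : Tendsto (conv a) atTop (nhds α)) (k : ℕ) :
    Irrational (tval (shf a (k+1))) :=
  irrational_of_flt hα (cfP a (k+2)) (cfP a (k+1)) (cfQ a (k+2)) (cfQ a (k+1))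
    (tail_eq ha hconv k)

lemma tval_gt_one {α : ℝ} (hα : Irrational α)
    (hconv : Tendsto (conv a) atTop (nhds α)) (k : ℕ) :
    (1:ℝ) < tval (shf a (k+1)) := by
  have h1 := tval_ge_one ha k
  have h2 := tval_irrational ha hα hconv k
  rcases lt_or_eq_of_le h1 with h | h
  · exact h
  · exact absurd (h ▸ (by norm_num : ¬ Irrational (1:ℝ))) (fun hh => hh h2)

end tailrel

lemma shf_zero (u : ℕ → ℤ) : shf u 0 = u := funext fun i => congrArg u (Nat.zero_add i)

section uniq
variable {u : ℕ → ℤ} (hu : ∀ i, 1 ≤ i → 1 ≤ u i)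
include hu

lemma shf_pos' (i : ℕ) : ∀ j, 1 ≤ j → 1 ≤ shf u i j := fun j hj => hu (i+j) (by omega)

lemma tval_shf_zero {x : ℝ} (hx : Tendsto (conv u) atTop (nhds x)) : tval (shf u 0) = x := by
  rw [shf_zero]
  exact tendsto_nhds_unique (tendsto_conv_tval hu) hx

lemma tval_chain {x : ℝ} (hxirr : Irrational x) (hx : Tendsto (conv u) atTop (nhds x)) :
    ∀ i, Irrational (tval (shf u i)) ∧ (1 < tval (shf u (i+1))) ∧
      tval (shf u i) = (u i : ℝ) + 1/(tval (shf u (i+1))) := by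
  have main : ∀ i, Irrational (tval (shf u i)) → (1 < tval (shf u (i+1))) ∧
      tval (shf u i) = (u i : ℝ) + 1/(tval (shf u (i+1))) ∧ Irrational (tval (shf u (i+1))) := by
    intro i hirr
    set v := shf u i with hv
    have hv1 : ∀ j, 1 ≤ j → 1 ≤ v j := shf_pos' hu i
    have hconv : Tendsto (conv v) atTop (nhds (tval v)) := tendsto_conv_tval hv1
    have hshf : shf v 1 = shf u (i+1) := by rw [hv, shf_shf]
    have hgt : 1 < tval (shf u (i+1)) := by
      rw [← hshf]
      exact tval_gt_one hv1 hirr hconv 0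
    have hirr2 : Irrational (tval (shf u (i+1))) := by
      rw [← hshf]
      exact tval_irrational hv1 hirr hconv 0
    refine ⟨hgt, ?_, hirr2⟩
    have heq := tail_eq hv1 hconv 0
    rw [hshf] at heq
    have hv0 : v 0 = u i := congrArg u (Nat.add_zero i)
    rw [cfP_two, cfP_one_eq, cfQ_two, cfQ_one_eq, hv0] at heq
    · set t := tval (shf u (i+1)) with htdef
      have ht0 : t ≠ 0 := by linarith
      rw [heq]
      push_cast
      field_simp
      ring
    all_goals rfl
  have irr : ∀ i, Irrational (tval (shf u i)) := by
    intro i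
    induction i with
    | zero => rw [tval_shf_zero hu hx]; exact hxirr
    | succ n ih => exact (main n ih).2.2
  intro i
  exact ⟨irr i, (main i (irr i)).1, (main i (irr i)).2.1⟩

lemma floor_tval {x : ℝ} (hxirr : Irrational x) (hx : Tendsto (conv u) atTop (nhds x)) (i : ℕ) :
    ⌊tval (shf u i)⌋ = u i := by
  obtain ⟨_, hgt, heq⟩ := tval_chain hu hxirr hx i
  have h1 : 0 < 1/(tval (shf u (i+1))) := by positivity
  have h2 : 1/(tval (shf u (i+1))) < 1 := by
    rw [div_lt_one (by linarith)]; exact hgt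
  rw [Int.floor_eq_iff]
  constructor <;> [linarith [heq]; linarith [heq]]

end uniq

lemma cf_unique {u v : ℕ → ℤ} (hu : ∀ i, 1 ≤ i → 1 ≤ u i) (hv : ∀ i, 1 ≤ i → 1 ≤ v i)
    {x : ℝ} (hxirr : Irrational x)
    (hxu : Tendsto (conv u) atTop (nhds x)) (hxv : Tendsto (conv v) atTop (nhds x)) :
    ∀ i, u i = v i := by
  have key : ∀ i, tval (shf u i) = tval (shf v i) := by
    intro i
    induction i with
    | zero => rw [tval_shf_zero hu hxu, tval_shf_zero hv hxv]
    | succ n ih =>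
        obtain ⟨hirru, hgtu, hequ⟩ := tval_chain hu hxirr hxu n
        obtain ⟨hirrv, hgtv, heqv⟩ := tval_chain hv hxirr hxv n
        have hfl : u n = v n := by
          rw [← floor_tval hu hxirr hxu n, ← floor_tval hv hxirr hxv n, ih]
        rw [ih, hfl] at hequ
        have h1 : 1/(tval (shf u (n+1))) = 1/(tval (shf v (n+1))) := by linarith [hequ, heqv]
        have hu0 : tval (shf u (n+1)) ≠ 0 := by linarith
        have hv0 : tval (shf v (n+1)) ≠ 0 := by linarith
        field_simp at h1
        linarith
  intro i
  rw [← floor_tval hu hxirr hxu i, ← floor_tval hv hxirr hxv i, key i]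

lemma euclid0 : ∀ (N : ℕ) (A C : ℤ), C.toNat ≤ N → 0 < C → IsCoprime A C →
    ∃ n : ℕ, ∃ c : ℕ → ℤ, (∀ i, 1 ≤ i → i ≤ n → 1 ≤ c i) ∧ (C < A → 1 ≤ c 0) ∧
      cfP c (n+2) = A ∧ cfQ c (n+2) = C := by
  intro N
  induction N with
  | zero => intro A C hN hC _; omega
  | succ N ih =>
      intro A C hN hC hcop
      rcases eq_or_lt_of_le (by omega : (1:ℤ) ≤ C) with h1 | h2
      · refine ⟨0, fun _ => A, fun i h1 h2 => absurd h2 (by omega), ?_, ?_, ?_⟩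
        · intro h
          show (1:ℤ) ≤ A
          omega
        · rw [cfP_two]
        · rw [cfQ_two, h1]
      · set q := A / C with hq
        set r := A % C with hr
        have hA : C * q + r = A := Int.mul_ediv_add_emod A C
        have h0 : 0 ≤ r := Int.emod_nonneg A (ne_of_gt hC)
        have hrC : r < C := Int.emod_lt_of_pos A hC
        obtain ⟨x, y, hxy⟩ := hcop
        have hrpos : 0 < r := by
          rcases eq_or_lt_of_le h0 with h | h
          · exfalso
            have hdvd : C ∣ A := Dvd.intro q (by omega)
            have : C ∣ 1 := by
              rw [← hxy]
              exact dvd_add (hdvd.mul_left x) (dvd_mul_left C y)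
            have := Int.le_of_dvd one_pos this
            omega
          · exact h
        have hcop2 : IsCoprime C r := ⟨x*q + y, x, by linear_combination x * hA + hxy⟩
        obtain ⟨n, c, hpos, hc0, hP, hQ⟩ := ih C r (by omega) hrpos hcop2
        have hc00 : 1 ≤ c 0 := hc0 hrC
        refine ⟨n+1, consSeq q c, ?_, ?_, ?_, ?_⟩
        · intro i hi1 hi2
          match i, hi1 with
          | (j+1), _ =>
            show 1 ≤ c j
            rcases Nat.eq_zero_or_pos j with hj | hj
            · rw [hj]; exact hc00
            · exact hpos j hj (by omega)
        · intro hCA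
          show 1 ≤ q
          rw [hq, Int.le_ediv_iff_mul_le hC]
          omega
        · rw [show n+1+2 = n+3 by rfl, cfP_cons, hP, hQ]; linear_combination hA
        · rw [show n+1+2 = n+3 by rfl, cfQ_cons, hP]

lemma flip {n : ℕ} {c : ℕ → ℤ} (hpos : ∀ i, 1 ≤ i → i ≤ n → 1 ≤ c i) :
    ∃ m : ℕ, ∃ d : ℕ → ℤ, (∀ i, 1 ≤ i → i ≤ m → 1 ≤ d i) ∧ cfP d (m+2) = cfP c (n+2) ∧
      cfQ d (m+2) = cfQ c (n+2) ∧ (m % 2 ≠ n % 2) := by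
  match n, hpos with
  | 0, hpos =>
      refine ⟨1, consSeq (c 0 - 1) (fun _ => 1), ?_, ?_, ?_, by omega⟩
      · intro i hi1 hi2
        have hi : i = 1 := by omega
        subst hi
        show (1:ℤ) ≤ 1
        exact le_refl _
      · have h := cfP_cons (c 0 - 1) (fun _ => (1:ℤ)) 0
        show cfP (consSeq (c 0 - 1) fun _ => (1:ℤ)) 3 = cfP c 2
        rw [h, cfP_two, cfQ_two, cfP_two]
        ring
      · have h := cfQ_cons (c 0 - 1) (fun _ => (1:ℤ)) 0
        show cfQ (consSeq (c 0 - 1) fun _ => (1:ℤ)) 3 = cfQ c 2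
        rw [h, cfP_two, cfQ_two]
  | (n'+1), hpos =>
      set n := n'+1 with hn
      have hcn : 1 ≤ c n := hpos n (by omega) (le_refl n)
      rcases eq_or_lt_of_le hcn with h1 | h2
      · -- c n = 1 : merge
        refine ⟨n', fun i => if i < n' then c i else c n' + 1, ?_, ?_, ?_, by omega⟩
        · intro i hi1 hi2
          by_cases h : i < n'
          · simp only [if_pos h]; exact hpos i hi1 (by omega)
          · simp only [if_neg h]
            have : i = n' := by omega
            have := hpos n' (by omega) (by omega)
            omega
        · have e1 : cfP (fun i => if i < n' then c i else c n' + 1) (n'+2)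
              = (c n' + 1) * cfP c (n'+1) + cfP c n' := by
            rw [cfP_rec]
            simp only [lt_irrefl, if_neg]
            rw [cfP_congr (a := fun i => if i < n' then c i else c n' + 1) (b := c) (n'+1)
              (fun i hi => by simp only [if_pos (by omega : i < n')]),
              cfP_congr (a := fun i => if i < n' then c i else c n' + 1) (b := c) n'
              (fun i hi => by simp only [if_pos (by omega : i < n')])]
            simp
          rw [e1, show n+2 = n'+3 by omega, cfP_rec c (n'+1), ← h1, cfP_rec c n']
          ring
        · have e1 : cfQ (fun i => if i < n' then c i else c n' + 1) (n'+2)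
              = (c n' + 1) * cfQ c (n'+1) + cfQ c n' := by
            rw [cfQ_rec]
            simp only [lt_irrefl, if_neg]
            rw [cfQ_congr (a := fun i => if i < n' then c i else c n' + 1) (b := c) (n'+1)
              (fun i hi => by simp only [if_pos (by omega : i < n')]),
              cfQ_congr (a := fun i => if i < n' then c i else c n' + 1) (b := c) n'
              (fun i hi => by simp only [if_pos (by omega : i < n')])]
            simp
          rw [e1, show n+2 = n'+3 by omega, cfQ_rec c (n'+1), ← h1, cfQ_rec c n']
          ring
      · -- c n ≥ 2 : split
        set d : ℕ → ℤ := fun i => if i < n then c i else if i = n then c n - 1 else 1 with hd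
        have hag : ∀ i, i < n → d i = c i := fun i hi => by simp [hd, if_pos hi]
        have hdn : d n = c n - 1 := by simp [hd]
        have hdn1 : d (n+1) = 1 := by
          simp only [hd]
          rw [if_neg (by omega), if_neg (by omega)]
        refine ⟨n+1, d, ?_, ?_, ?_, by omega⟩
        · intro i hi1 hi2
          by_cases h : i < n
          · rw [hag i h]; exact hpos i hi1 (by omega)
          · by_cases h' : i = n
            · rw [h', hdn]; omega
            · have : i = n+1 := by omega
              rw [this, hdn1]
        · rw [show n+1+2 = (n+1)+2 by rfl, cfP_rec d (n+1), hdn1, cfP_rec d n, hdn,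
            cfP_congr (a := d) (b := c) (n+1) (fun i hi => hag i (by omega)),
            cfP_congr (a := d) (b := c) n (fun i hi => hag i (by omega)),
            cfP_rec c n]
          ring
        · rw [show n+1+2 = (n+1)+2 by rfl, cfQ_rec d (n+1), hdn1, cfQ_rec d n, hdn,
            cfQ_congr (a := d) (b := c) (n+1) (fun i hi => hag i (by omega)),
            cfQ_congr (a := d) (b := c) n (fun i hi => hag i (by omega)),
            cfQ_rec c n]
          ring

lemma euclid (A C : ℤ) (hC : 0 < C) (hcop : IsCoprime A C) (ε : ℤ) (hε : ε = 1 ∨ ε = -1) :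
    ∃ n : ℕ, ∃ c : ℕ → ℤ, (∀ i, 1 ≤ i → i ≤ n → 1 ≤ c i) ∧ cfP c (n+2) = A ∧ cfQ c (n+2) = C ∧
      ((-1:ℤ))^n = ε := by
  obtain ⟨n, c, hpos, _, hP, hQ⟩ := euclid0 C.toNat A C (le_refl _) hC hcop
  by_cases h : ((-1:ℤ))^n = ε
  · exact ⟨n, c, hpos, hP, hQ, h⟩
  · obtain ⟨m, d, hpos', hP', hQ', hm⟩ := flip hpos
    refine ⟨m, d, hpos', by rw [hP', hP], by rw [hQ', hQ], ?_⟩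
    have hn2 : ((-1:ℤ))^n = 1 ∨ ((-1:ℤ))^n = -1 := neg_one_pow_eq_or ℤ n
    have hmn : ((-1:ℤ))^m = -((-1:ℤ))^n := by
      rcases Nat.even_or_odd n with he | ho
      · have h1 : ((-1:ℤ))^n = 1 := he.neg_one_pow
        have h2 : Odd m := by
          rw [Nat.odd_iff]
          rw [Nat.even_iff] at he
          omega
        rw [h1, h2.neg_one_pow]
      · have h1 : ((-1:ℤ))^n = -1 := ho.neg_one_pow
        have h2 : Even m := by
          rw [Nat.even_iff]
          rw [Nat.odd_iff] at ho
          omega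
        rw [h1, h2.neg_one_pow]
        norm_num
    rcases hn2 with h1 | h1 <;> rcases hε with h2 | h2 <;> rw [hmn, h1, h2] <;> rw [h1, h2] at h <;> omega
lemma flt_comp {x y z : ℝ} {p q r s p' q' r' s' : ℝ}
    (h1 : y = (p*x + q)/(r*x + s)) (hd1 : r*x + s ≠ 0)
    (h2 : z = (p'*y + q')/(r'*y + s')) (hd2 : r'*y + s' ≠ 0) :
    z = ((p'*p + q'*r)*x + (p'*q + q'*s))/((r'*p + s'*r)*x + (r'*q + s'*s))
    ∧ (r'*p + s'*r)*x + (r'*q + s'*s) ≠ 0 := by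
  have e1 : r'*y + s' = ((r'*p + s'*r)*x + (r'*q + s'*s))/(r*x+s) := by
    rw [h1, mul_div_assoc', div_add' _ _ _ hd1]; ring
  have hden : (r'*p + s'*r)*x + (r'*q + s'*s) ≠ 0 := by
    intro h0; apply hd2; rw [e1, h0, zero_div]
  refine ⟨?_, hden⟩
  rw [h2, h1,
    show p'*((p*x+q)/(r*x+s)) + q' = ((p'*p + q'*r)*x + (p'*q + q'*s))/(r*x+s) by
      rw [mul_div_assoc', div_add' _ _ _ hd1]; ring,
    show r'*((p*x+q)/(r*x+s)) + s' = ((r'*p + s'*r)*x + (r'*q + s'*s))/(r*x+s) by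
      rw [mul_div_assoc', div_add' _ _ _ hd1]; ring,
    div_div_helper _ _ _ hd1]

lemma flt_inv {x t : ℝ} {P P' Q Q' : ℝ} (h : x = (P*t + P')/(Q*t+Q')) (hd : Q*t+Q' ≠ 0)
    (hd2 : Q*x - P ≠ 0) :
    t = ((-Q')*x + P')/(Q*x + (-P)) := by
  have hx : x * (Q*t+Q') = P*t + P' := by rw [h]; exact div_mul_cancel₀ _ hd
  rw [show Q*x + (-P) = Q*x - P by ring, eq_div_iff hd2]
  linear_combination hx

lemma lin_ne_zero {α : ℝ} (hα : Irrational α) {Q P : ℤ} (hQ : Q ≠ 0) :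
    (Q:ℝ)*α - (P:ℝ) ≠ 0 := by
  intro h
  apply hα
  refine ⟨(P:ℚ)/(Q:ℚ), ?_⟩
  have hQR : (Q:ℝ) ≠ 0 := by exact_mod_cast hQ
  push_cast
  field_simp
  linarith [h]

lemma forward {α β : ℝ} {a b : ℕ → ℤ} (hα : Irrational α) (hβ : Irrational β)
    (ha : ∀ i, 1 ≤ i → 1 ≤ a i) (hb : ∀ i, 1 ≤ i → 1 ≤ b i)
    (hava : Tendsto (conv a) atTop (nhds α)) (hbvb : Tendsto (conv b) atTop (nhds β))
    (k l : ℕ) (h : ∀ i, 1 ≤ i → a (k+i) = b (l+i)) :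
    ∃ M : Matrix (Fin 2) (Fin 2) ℤ, (M.det = 1 ∨ M.det = -1) ∧
      β = ((M 0 0 : ℝ) * α + (M 0 1 : ℝ)) / ((M 1 0 : ℝ) * α + (M 1 1 : ℝ)) := by
  have hshift : shf a (k+1) = shf b (l+1) := by
    funext i
    show a (k+1+i) = b (l+1+i)
    rw [show k+1+i = k+(1+i) by omega, show l+1+i = l+(1+i) by omega]
    exact h (1+i) (by omega)
  have heqa := tail_eq ha hava k
  have hdena := tail_den_pos ha k
  have heqb := tail_eq hb hbvb l
  have hdenb := tail_den_pos hb l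
  rw [← hshift] at heqb hdenb
  have hQa : cfQ a (k+2) ≠ 0 := by have := cfQ_one_le ha k; omega
  have hd2 : (cfQ a (k+2):ℝ)*α - (cfP a (k+2):ℝ) ≠ 0 := lin_ne_zero hα hQa
  have hinv := flt_inv heqa (ne_of_gt hdena) hd2
  have hcomp := flt_comp hinv (by rw [show (cfQ a (k+2):ℝ)*α + (-(cfP a (k+2):ℝ)) =
      (cfQ a (k+2):ℝ)*α - (cfP a (k+2):ℝ) by ring]; exact hd2) heqb (ne_of_gt hdenb)
  set A : ℤ := cfP b (l+2) * (-(cfQ a (k+1))) + cfP b (l+1) * cfQ a (k+2) with hA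
  set B : ℤ := cfP b (l+2) * cfP a (k+1) + cfP b (l+1) * (-(cfP a (k+2))) with hB
  set C : ℤ := cfQ b (l+2) * (-(cfQ a (k+1))) + cfQ b (l+1) * cfQ a (k+2) with hC
  set D : ℤ := cfQ b (l+2) * cfP a (k+1) + cfQ b (l+1) * (-(cfP a (k+2))) with hD
  refine ⟨!![A, B; C, D], ?_, ?_⟩
  · rw [Matrix.det_fin_two_of]
    have hdb := cfDet b (l+1)
    have hda := cfDet a (k+1)
    have key : A * D - B * C =
        (cfP b (l+2) * cfQ b (l+1) - cfP b (l+1) * cfQ b (l+2)) *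
        (cfP a (k+2) * cfQ a (k+1) - cfP a (k+1) * cfQ a (k+2)) := by
      rw [hA, hB, hC, hD]; ring
    rw [key, hdb, hda]
    rcases neg_one_pow_eq_or ℤ (l+1) with h1 | h1 <;>
      rcases neg_one_pow_eq_or ℤ (k+1) with h2 | h2 <;> rw [h1, h2] <;> norm_num
  · have e00 : (!![A, B; C, D] : Matrix (Fin 2) (Fin 2) ℤ) 0 0 = A := rfl
    have e01 : (!![A, B; C, D] : Matrix (Fin 2) (Fin 2) ℤ) 0 1 = B := rfl
    have e10 : (!![A, B; C, D] : Matrix (Fin 2) (Fin 2) ℤ) 1 0 = C := rfl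
    have e11 : (!![A, B; C, D] : Matrix (Fin 2) (Fin 2) ℤ) 1 1 = D := rfl
    rw [e00, e01, e10, e11, hA, hB, hC, hD]
    rw [hcomp.1]
    push_cast
    ring_nf

lemma backward_pos {α β : ℝ} {a b : ℕ → ℤ} (hα : Irrational α) (hβ : Irrational β)
    (ha : ∀ i, 1 ≤ i → 1 ≤ a i) (hb : ∀ i, 1 ≤ i → 1 ≤ b i)
    (hava : Tendsto (conv a) atTop (nhds α)) (hbvb : Tendsto (conv b) atTop (nhds β))
    (AA BB CC DD : ℤ) (hdet : AA*DD - BB*CC = 1 ∨ AA*DD - BB*CC = -1)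
    (hposden : 0 < (CC:ℝ)*α + (DD:ℝ))
    (heq : β = ((AA:ℝ) * α + (BB:ℝ)) / ((CC:ℝ) * α + (DD:ℝ))) :
    ∃ k l : ℕ, ∀ i : ℕ, 1 ≤ i → a (k + i) = b (l + i) := by
  set θ : ℝ := (CC:ℝ)*α + (DD:ℝ) with hθdef
  -- pick a good index m
  have htt : Tendsto (fun n => θ * (cfQ a (n+2) : ℝ)) atTop atTop :=
    (tendsto_cfQ ha).const_mul_atTop hposden
  obtain ⟨m1, hm1⟩ := eventually_atTop.mp (htt.eventually_ge_atTop (2*|(CC:ℝ)| + 2))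
  set m : ℕ := m1 + 1 with hmdef
  have hcond1 : 2*|(CC:ℝ)| + 2 ≤ θ * (cfQ a (m+2) : ℝ) := hm1 m (by omega)
  have hcond0 : 2*|(CC:ℝ)| + 2 ≤ θ * (cfQ a (m+1) : ℝ) := by
    have := hm1 m1 (le_refl _)
    simpa [hmdef] using this
  -- delta bounds
  have hdel : ∀ j : ℕ, |α*(cfQ a (j+2):ℝ) - (cfP a (j+2):ℝ)| ≤ 1 := by
    intro j
    have h1 := abs_lim_linear ha hava j
    have h2 : (1:ℝ) ≤ (cfQ a (j+3):ℝ) := by exact_mod_cast cfQ_one_le ha (j+1)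
    calc |α*(cfQ a (j+2):ℝ) - (cfP a (j+2):ℝ)| ≤ ((cfQ a (j+3):ℝ))⁻¹ := h1
      _ ≤ 1 := inv_le_one_of_one_le₀ h2
  -- X values
  set X : ℕ → ℤ := fun j => CC * cfP a (j+2) + DD * cfQ a (j+2) with hXdef
  have hXreal : ∀ j : ℕ, (X j : ℝ) = θ * (cfQ a (j+2):ℝ)
      - (CC:ℝ) * (α*(cfQ a (j+2):ℝ) - (cfP a (j+2):ℝ)) := by
    intro j
    rw [hXdef, hθdef]
    push_cast
    ring
  have hbound : ∀ j : ℕ, (CC:ℝ) * (α*(cfQ a (j+2):ℝ) - (cfP a (j+2):ℝ)) ≤ |(CC:ℝ)| ∧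
      -|(CC:ℝ)| ≤ (CC:ℝ) * (α*(cfQ a (j+2):ℝ) - (cfP a (j+2):ℝ)) := by
    intro j
    have h1 := hdel j
    have h2 : |(CC:ℝ) * (α*(cfQ a (j+2):ℝ) - (cfP a (j+2):ℝ))| ≤ |(CC:ℝ)| := by
      rw [abs_mul]
      calc |(CC:ℝ)| * |α*(cfQ a (j+2):ℝ) - (cfP a (j+2):ℝ)| ≤ |(CC:ℝ)| * 1 :=
            mul_le_mul_of_nonneg_left h1 (abs_nonneg _)
        _ = |(CC:ℝ)| := mul_one _
    exact ⟨le_trans (le_abs_self _) h2, le_trans (neg_le_neg h2) (neg_abs_le _)⟩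
  have hXm_pos : 0 < X m := by
    have h1 := (hbound m).1
    have h2 := hXreal m
    have : (0:ℝ) < (X m : ℝ) := by
      rw [h2]
      have habs : (0:ℝ) ≤ |(CC:ℝ)| := abs_nonneg _
      linarith
    exact_mod_cast this
  have hXlt : X m < X (m+1) := by
    have hrec : cfQ a (m+2) + cfQ a (m+1) ≤ cfQ a (m+3) := cfQ_rec_ge ha m
    have hrecR : (cfQ a (m+1):ℝ) ≤ (cfQ a (m+3):ℝ) - (cfQ a (m+2):ℝ) := by
      have : (cfQ a (m+2):ℝ) + (cfQ a (m+1):ℝ) ≤ (cfQ a (m+3):ℝ) := by exact_mod_cast hrec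
      linarith
    have h1 := (hbound m).2
    have h2 := (hbound (m+1)).1
    have e1 := hXreal m
    have e2 := hXreal (m+1)
    have hmul : θ * (cfQ a (m+1):ℝ) ≤ θ * ((cfQ a (m+3):ℝ) - (cfQ a (m+2):ℝ)) :=
      mul_le_mul_of_nonneg_left hrecR (le_of_lt hposden)
    have : (X m : ℝ) < (X (m+1) : ℝ) := by
      rw [e1, e2]
      rw [show m+1+2 = m+3 by omega] at *
      linarith
    exact_mod_cast this
  -- the tail substitution at k := m+1
  set k : ℕ := m + 1 with hkdef
  set t : ℝ := tval (shf a (k+1)) with htdef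
  have heqa := tail_eq ha hava k
  have hdena := tail_den_pos ha k
  have hcomp := flt_comp heqa (ne_of_gt hdena) heq (ne_of_gt hposden)
  set A' : ℤ := AA * cfP a (k+2) + BB * cfQ a (k+2) with hA'
  set B' : ℤ := AA * cfP a (k+1) + BB * cfQ a (k+1) with hB'
  set C' : ℤ := CC * cfP a (k+2) + DD * cfQ a (k+2) with hC'
  set D' : ℤ := CC * cfP a (k+1) + DD * cfQ a (k+1) with hD'
  have hCX : C' = X k := by rw [hC']
  have hDX : D' = X m := by rw [hD']
  have hβ' : β = ((A':ℝ)*t + (B':ℝ))/((C':ℝ)*t + (D':ℝ)) := by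
    rw [hcomp.1, hA', hB', hC', hD']
    congr 1 <;> push_cast <;> ring
  have hC'pos : 0 < C' := by omega
  have hD'pos : 0 < D' := by omega
  have hDC : D' < C' := by omega
  -- determinant of the composed matrix
  have hda := cfDet a (k+1)
  set ε : ℤ := (AA*DD - BB*CC) * (-1:ℤ)^(k+1) with hεdef
  have hdet' : A'*D' - B'*C' = ε := by
    rw [hεdef, ← hda, hA', hB', hC', hD']
    ring
  have hε : ε = 1 ∨ ε = -1 := by
    rcases hdet with h1 | h1 <;> rcases neg_one_pow_eq_or ℤ (k+1) with h2 | h2 <;>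
      rw [hεdef, h1, h2] <;> norm_num
  clear_value X m k t A' B' C' D' ε
  -- coprimality
  have hcop : IsCoprime A' C' := by
    rcases hε with h1 | h1
    · exact ⟨D', -B', by rw [h1] at hdet'; linarith [hdet']⟩
    · exact ⟨-D', B', by rw [h1] at hdet'; linarith [hdet']⟩
  -- finite continued fraction of A'/C' with the right parity
  obtain ⟨n, c, hcpos, hPc, hQc, hsign⟩ := euclid A' C' hC'pos hcop (-ε)
    (by rcases hε with h1 | h1 <;> rw [h1] <;> norm_num)
  -- replace c by a totally positive version
  set c' : ℕ → ℤ := fun i => if i ≤ n then c i else 1 with hc'def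
  have hc'pos : ∀ i, 1 ≤ i → 1 ≤ c' i := by
    intro i hi
    rw [hc'def]
    by_cases h : i ≤ n
    · simp only [if_pos h]; exact hcpos i hi h
    · simp only [if_neg h]; exact le_refl _
  have hagree : ∀ i, i ≤ n → c' i = c i := fun i hi => by
    simp only [hc'def, if_pos hi]
  have hPc' : cfP c' (n+2) = A' := by
    rw [cfP_congr (n+2) (fun i hi => hagree i (by omega)), hPc]
  have hQc' : cfQ c' (n+2) = C' := by
    rw [cfQ_congr (n+2) (fun i hi => hagree i (by omega)), hQc]
  -- identify B' and D'
  have hdetc := cfDet c' (n+1)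
  have hsign' : ((-1:ℤ))^(n+1) = ε := by
    rw [pow_succ]
    rw [hsign]
    ring
  rw [hsign'] at hdetc
  set p' : ℤ := cfP c' (n+1) with hp'
  set q' : ℤ := cfQ c' (n+1) with hq'
  have hkey : A' * (q' - D') = (p' - B') * C' := by
    rw [hPc', hQc'] at hdetc
    linear_combination hdetc - hdet'
  have hq'nonneg : 0 ≤ q' := cfQ_nonneg hc'pos (n+1)
  have hq'le : q' ≤ C' := by
    rw [← hQc']
    exact cfQ_mono hc'pos n
  have hdvd : C' ∣ (q' - D') := by
    have h1 : C' ∣ A' * (q' - D') := by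
      rw [hkey]
      exact Dvd.intro_left _ rfl
    exact (hcop.symm).dvd_of_dvd_mul_left h1
  have hqD : q' = D' := by
    obtain ⟨u, hu⟩ := hdvd
    have hb1 : q' - D' < C' := by omega
    have hb2 : -C' < q' - D' := by omega
    have h1 : u < 1 := by
      by_contra h
      push_neg at h
      have h3 : C' * 1 ≤ C' * u := mul_le_mul_of_nonneg_left h (le_of_lt hC'pos)
      rw [mul_one] at h3
      omega
    have h2 : -1 < u := by
      by_contra h
      push_neg at h
      have h3 : C' * u ≤ C' * (-1) := mul_le_mul_of_nonneg_left h (le_of_lt hC'pos)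
      rw [mul_neg_one] at h3
      omega
    have hu0 : u = 0 := by omega
    rw [hu0, mul_zero] at hu
    omega
  have hpB : p' = B' := by
    rw [hqD, sub_self, mul_zero] at hkey
    rcases mul_eq_zero.mp hkey.symm with h | h
    · omega
    · omega
  -- build the glued sequence d
  set e : ℕ → ℤ := shf a (k+1) with hedef
  have hepos : ∀ i, 1 ≤ e i := fun i => ha (k+1+i) (by omega)
  set d : ℕ → ℤ := fun i => if i ≤ n then c' i else e (i - (n+1)) with hddef
  have hdpos : ∀ i, 1 ≤ i → 1 ≤ d i := by
    intro i hi
    rw [hddef]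
    by_cases h : i ≤ n
    · simp only [if_pos h]; exact hc'pos i hi
    · simp only [if_neg h]; exact hepos _
  have hshfd : shf d (n+1) = e := by
    funext i
    show d (n+1+i) = e i
    rw [hddef]
    simp only [if_neg (by omega : ¬ n+1+i ≤ n)]
    congr 1
    omega
  have hdP2 : cfP d (n+2) = A' := by
    rw [cfP_congr (n+2) (fun i hi => by
      show d i = c' i
      rw [hddef]; simp only [if_pos (by omega : i ≤ n)]), hPc']
  have hdP1 : cfP d (n+1) = B' := by
    rw [← hpB, hp']
    exact cfP_congr (n+1) (fun i hi => by
      show d i = c' i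
      rw [hddef]; simp only [if_pos (by omega : i ≤ n)])
  have hdQ2 : cfQ d (n+2) = C' := by
    rw [cfQ_congr (n+2) (fun i hi => by
      show d i = c' i
      rw [hddef]; simp only [if_pos (by omega : i ≤ n)]), hQc']
  have hdQ1 : cfQ d (n+1) = D' := by
    rw [← hqD, hq']
    exact cfQ_congr (n+1) (fun i hi => by
      show d i = c' i
      rw [hddef]; simp only [if_pos (by omega : i ≤ n)])
  -- convergence of conv d to β
  have hepos' : ∀ i, 1 ≤ i → 1 ≤ e i := fun i _ => hepos i
  have hte : Tendsto (conv e) atTop (nhds t) := by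
    rw [htdef, hedef]
    exact tendsto_conv_tval hepos'
  have hqe : Tendsto (fun g => (cfQ e (g+2) : ℝ)) atTop atTop := tendsto_cfQ hepos'
  have htpos : (1:ℝ) ≤ t := by rw [htdef]; exact tval_ge_one ha k
  have hden2 : (C':ℝ)*t + (D':ℝ) ≠ 0 := by
    have c1 : (1:ℝ) ≤ (C':ℝ) := by exact_mod_cast hC'pos
    have c2 : (0:ℝ) < (D':ℝ) := by exact_mod_cast hD'pos
    nlinarith
  have hlim := flt_lim (p := fun g => (cfP e (g+2):ℝ)) (q := fun g => (cfQ e (g+2):ℝ))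
    hte hqe (A':ℝ) (B':ℝ) (C':ℝ) (D':ℝ) hden2
  have heqd : ∀ g, conv d (n+1+g)
      = ((A':ℝ) * (cfP e (g+2):ℝ) + (B':ℝ) * (cfQ e (g+2):ℝ)) /
        ((C':ℝ) * (cfP e (g+2):ℝ) + (D':ℝ) * (cfQ e (g+2):ℝ)) := by
    intro g
    unfold conv
    rw [show n+1+g+2 = n+3+g by omega]
    rw [splitP d n g, splitQ d n g, hshfd, hdP2, hdP1, hdQ2, hdQ1]
    push_cast
    rfl
  have hconvd_shift : Tendsto (fun g => conv d (n+1+g)) atTop (nhds β) := by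
    rw [show (fun g => conv d (n+1+g)) = (fun g =>
        ((A':ℝ) * (cfP e (g+2):ℝ) + (B':ℝ) * (cfQ e (g+2):ℝ)) /
        ((C':ℝ) * (cfP e (g+2):ℝ) + (D':ℝ) * (cfQ e (g+2):ℝ))) from funext heqd]
    rw [hβ']
    exact hlim
  have hconvd : Tendsto (conv d) atTop (nhds β) := by
    rw [← tendsto_add_atTop_iff_nat (n+1)]
    have : (fun g => conv d (g + (n+1))) = (fun g => conv d (n+1+g)) := by
      funext g; rw [Nat.add_comm]
    rw [this]
    exact hconvd_shift
  -- uniqueness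
  have huniq := cf_unique hb hdpos hβ hbvb hconvd
  refine ⟨k, n, ?_⟩
  intro i hi
  have h1 : b (n+i) = d (n+i) := huniq (n+i)
  rw [h1, hddef]
  simp only [if_neg (by omega : ¬ n+i ≤ n)]
  rw [hedef]
  show a (k+i) = a (k+1 + (n+i - (n+1)))
  congr 1
  omega

lemma backward {α β : ℝ} {a b : ℕ → ℤ} (hα : Irrational α) (hβ : Irrational β)
    (ha : ∀ i, 1 ≤ i → 1 ≤ a i) (hb : ∀ i, 1 ≤ i → 1 ≤ b i)
    (hava : Tendsto (conv a) atTop (nhds α)) (hbvb : Tendsto (conv b) atTop (nhds β))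
    (M : Matrix (Fin 2) (Fin 2) ℤ) (hdet : M.det = 1 ∨ M.det = -1)
    (heq : β = ((M 0 0 : ℝ) * α + (M 0 1 : ℝ)) / ((M 1 0 : ℝ) * α + (M 1 1 : ℝ))) :
    ∃ k l : ℕ, ∀ i : ℕ, 1 ≤ i → a (k + i) = b (l + i) := by
  rw [Matrix.det_fin_two] at hdet
  set AA := M 0 0
  set BB := M 0 1
  set CC := M 1 0
  set DD := M 1 1
  have hne : (CC:ℝ)*α + (DD:ℝ) ≠ 0 := by
    intro h0
    rw [h0, div_zero] at heq
    exact hβ ⟨0, by rw [heq]; simp⟩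
  rcases lt_or_gt_of_ne hne with hneg | hpos
  · apply backward_pos hα hβ ha hb hava hbvb (-AA) (-BB) (-CC) (-DD) ?_ ?_ ?_
    · have e : (-AA)*(-DD) - (-BB)*(-CC) = AA*DD - BB*CC := by ring
      rw [e]; exact hdet
    · push_cast
      linarith
    · have e1 : ((-AA:ℤ):ℝ)*α + ((-BB:ℤ):ℝ) = -((AA:ℝ)*α + (BB:ℝ)) := by push_cast; ring
      have e2 : ((-CC:ℤ):ℝ)*α + ((-DD:ℤ):ℝ) = -((CC:ℝ)*α + (DD:ℝ)) := by push_cast; ring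
      rw [e1, e2, neg_div_neg_eq]
      exact heq
  · exact backward_pos hα hβ ha hb hava hbvb AA BB CC DD hdet hpos heq

end HW174


/-- Hardy–Wright Thm 174: two irrational reals have continued fraction
expansions sharing a common tail iff they are `GL(2, ℤ)`-equivalent by a fractional
linear transformation. Here `a` (resp. `b`) is the continued fraction coefficient
sequence of `α` (resp. `β`), characterised by positivity of the partial quotients and
convergence of the convergents. -/
theorem stmt6 (α β : ℝ) (hα : Irrational α) (hβ : Irrational β)
    (a b : ℕ → ℤ) (ha : ∀ i, 1 ≤ i → 0 < a i) (hb : ∀ i, 1 ≤ i → 0 < b i)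
    (hava : Tendsto (fun k => (cfP a (k + 2) : ℝ) / (cfQ a (k + 2) : ℝ)) atTop (nhds α))
    (hbvb : Tendsto (fun k => (cfP b (k + 2) : ℝ) / (cfQ b (k + 2) : ℝ)) atTop (nhds β)) :
    (∃ k l : ℕ, ∀ i : ℕ, 1 ≤ i → a (k + i) = b (l + i)) ↔
      (∃ M : Matrix (Fin 2) (Fin 2) ℤ, (M.det = 1 ∨ M.det = -1) ∧
        β = ((M 0 0 : ℝ) * α + (M 0 1 : ℝ)) / ((M 1 0 : ℝ) * α + (M 1 1 : ℝ))) := by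
  have ha' : ∀ i, 1 ≤ i → 1 ≤ a i := fun i hi => by have := ha i hi; omega
  have hb' : ∀ i, 1 ≤ i → 1 ≤ b i := fun i hi => by have := hb i hi; omega
  have hava' : Tendsto (HW174.conv a) atTop (nhds α) := hava
  have hbvb' : Tendsto (HW174.conv b) atTop (nhds β) := hbvb
  constructor
  · rintro ⟨k, l, h⟩
    exact HW174.forward hα hβ ha' hb' hava' hbvb' k l h
  · rintro ⟨M, hdet, heq⟩
    exact HW174.backward hα hβ ha' hb' hava' hbvb' M hdet heq
end

section
/- The real numbers (4 + √37)/7 and (5 + √37)/4 are not GL(2, ℤ)-equivalent: there is no integer matrix [[a,b],[c,d]] with ad − bc = ±1 such that (5 + √37)/4 = (a·(4+√37)/7 + b)/(c·(4+√37)/7 + d). -/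
/-- Descent lemma: no integer solutions to `x² - 37y² = ±28` with
`x ≡ ±11y (mod 28)`. -/
theorem stmt7_descent : ∀ n : ℕ, ∀ x y : ℤ, y.natAbs = n →
    (x^2 - 37*y^2 = 28 ∨ x^2 - 37*y^2 = -28) →
    (28 ∣ x - 11*y ∨ 28 ∣ x + 11*y) → False := by
  intro n
  induction n using Nat.strong_induction_on with
  | _ n ih =>
    intro x y hn heq hdvd
    -- normalize signs
    have hx2 : x^2 = ((x.natAbs : ℤ))^2 := by
      rcases Int.natAbs_eq x with h | h <;> nth_rewrite 1 [h] <;> ring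
    have hy2 : y^2 = ((y.natAbs : ℤ))^2 := by
      rcases Int.natAbs_eq y with h | h <;> nth_rewrite 1 [h] <;> ring
    rw [hx2, hy2] at heq
    obtain ⟨a, ha⟩ : ∃ a : ℤ, (x.natAbs : ℤ) = a := ⟨_, rfl⟩
    obtain ⟨b, hb⟩ : ∃ b : ℤ, (y.natAbs : ℤ) = b := ⟨_, rfl⟩
    rw [ha, hb] at heq
    have hdvd' : 28 ∣ a - 11*b ∨ 28 ∣ a + 11*b := by omega
    have ha0 : 0 ≤ a := by omega
    have hb0 : 0 ≤ b := by omega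
    have hn' : b = n := by omega
    by_cases hbs : b ≤ 1
    · have hb01 : b = 0 ∨ b = 1 := by omega
      rcases hb01 with h | h
      · rcases heq with hh | hh
        · have h1 : a ≤ 5 := by nlinarith
          have h2 : 6 ≤ a := by nlinarith
          omega
        · nlinarith
      · rcases heq with hh | hh
        · have h1 : a ≤ 8 := by nlinarith
          have h2 : 9 ≤ a := by nlinarith
          omega
        · have h1 : a ≤ 3 := by nlinarith
          have h2 : 3 ≤ a := by nlinarith
          omega
    · have hb2 : 2 ≤ b := by omega
      have h5 : 5*b < a := by
        by_contra hcon
        push_neg at hcon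
        have h1 : (0:ℤ) ≤ (5*b - a) * (5*b + a) :=
          mul_nonneg (by linarith) (by linarith)
        rcases heq with h | h <;> nlinarith
      have h7 : a < 7*b := by
        by_contra hcon
        push_neg at hcon
        have h1 : (0:ℤ) ≤ (a - 7*b) * (a + 7*b) :=
          mul_nonneg (by linarith) (by linarith)
        rcases heq with h | h <;> nlinarith
      have heqn : (6*a-37*b)^2 - 37*(a-6*b)^2 = 28 ∨
          (6*a-37*b)^2 - 37*(a-6*b)^2 = -28 := by
        rcases heq with h | h
        · right; linear_combination -h
        · left; linear_combination -h
      exact ih (a-6*b).natAbs (by omega) (6*a-37*b) (a-6*b) rfl heqn (by omega)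

/-- The real numbers `(4 + √37)/7` and `(5 + √37)/4` are not
`GL(2, ℤ)`-equivalent under fractional linear transformations. -/
theorem stmt7 :
    ¬ ∃ a b c d : ℤ, (a * d - b * c = 1 ∨ a * d - b * c = -1) ∧
      (5 + Real.sqrt 37) / 4 =
        ((a : ℝ) * ((4 + Real.sqrt 37) / 7) + (b : ℝ)) /
          ((c : ℝ) * ((4 + Real.sqrt 37) / 7) + (d : ℝ)) := by
  rintro ⟨a, b, c, d, hdet, heq⟩
  set s := Real.sqrt 37 with hsdef
  have hs2 : s^2 = 37 := Real.sq_sqrt (by norm_num)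
  have hs0 : 0 ≤ s := Real.sqrt_nonneg 37
  have hirr : Irrational s := by
    have := (by norm_num : Nat.Prime 37).irrational_sqrt
    simpa using this
  by_cases hD : (c:ℝ) * ((4+s)/7) + d = 0
  · rw [hD, div_zero] at heq
    have : s = -5 := by linarith
    linarith
  · have hD7 : (c:ℝ)*(4+s) + (d:ℝ)*7 ≠ 0 := by
      intro h0
      apply hD
      have hrw : (c:ℝ) * ((4+s)/7) + d = ((c:ℝ)*(4+s) + (d:ℝ)*7)/7 := by ring
      rw [hrw, h0]
      norm_num
    have key : ((9*c+7*d-4*a : ℤ) : ℝ) * s = ((16*a+28*b-57*c-35*d : ℤ) : ℝ) := by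
      field_simp [hD7, show (4+s)*(c:ℝ) + 7*d ≠ 0 by intro h; apply hD7; linarith] at heq
      push_cast
      linear_combination heq - (c:ℝ)*hs2
    have hc1 : 9*c+7*d-4*a = 0 := by
      by_contra h0
      apply hirr
      refine ⟨(16*a+28*b-57*c-35*d : ℚ) / (9*c+7*d-4*a : ℚ), ?_⟩
      have hne : ((9*c+7*d-4*a : ℤ):ℝ) ≠ 0 := Int.cast_ne_zero.mpr h0
      push_cast
      rw [div_eq_iff (by push_cast at hne ⊢; exact hne)]
      push_cast at key
      linarith [key]
    have hc2 : 16*a+28*b-57*c-35*d = 0 := by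
      have h0 : ((9*c+7*d-4*a : ℤ):ℝ) = 0 := by rw [hc1]; simp
      have : ((16*a+28*b-57*c-35*d : ℤ):ℝ) = 0 := by rw [← key, h0, zero_mul]
      exact_mod_cast this
    have ha' : a = 7*b - 3*c := by omega
    have hd' : d = 4*b - 3*c := by omega
    subst ha' hd'
    have heqI : (28*b-17*c)^2 - 37*c^2 = 28 ∨ (28*b-17*c)^2 - 37*c^2 = -28 := by
      rcases hdet with h | h
      · left; linear_combination 28*h
      · right; linear_combination 28*h
    exact stmt7_descent c.natAbs (28*b-17*c) c rfl heqI (Or.inl ⟨b - c, by ring⟩)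
end

section
/- The matrices M_1 = [[10, 7],[3, 2]] and M_2 = [[11, 4],[3, 1]] have the same characteristic polynomial (hence the same eigenvalues 6 ± √37), but they are not conjugate in GL(2, ℤ): there is no P ∈ GL(2, ℤ) with P M_1 P⁻¹ = M_2. -/
open Polynomial

private lemma step37 (x y : ℤ) (hy : 4 ≤ y)
    (h : x*x - 37*(y*y) = 9 ∨ x*x - 37*(y*y) = -9) (h9 : (9:ℤ) ∣ x - y) :
    ∃ x' y' : ℤ, (x'*x' - 37*(y'*y') = 9 ∨ x'*x' - 37*(y'*y') = -9) ∧
      (9:ℤ) ∣ x' - y' ∧ y'.natAbs < y.natAbs := by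
  have hy2 : 16 ≤ y*y := by nlinarith
  have h36 : 7 ≤ x*x - 36*(y*y) := by rcases h with h | h <;> linarith
  have hx2 : x*x ≤ 37*(y*y) + 9 := by rcases h with h | h <;> linarith
  rcases le_or_gt x 0 with hx | hx
  · -- x < 0; use x' = 73x + 444y, y' = 12x + 73y
    have hxlt : x < -6*y := by nlinarith [mul_self_nonneg (x + 6*y)]
    refine ⟨73*x + 444*y, 12*x + 73*y, ?_, ?_, ?_⟩
    · rcases h with h | h
      · left; nlinarith [h]
      · right; nlinarith [h]
    · obtain ⟨k, hk⟩ := h9; exact ⟨61*k + 48*y, by linarith⟩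
    · have hgt : -y < 12*x + 73*y := by nlinarith [mul_self_nonneg (6*x + 37*y)]
      have hlt : 12*x + 73*y < y := by nlinarith
      omega
  · -- x > 0 : use x' = 73x - 444y, y' = 73y - 12x
    have hxgt : 6*y < x := by nlinarith [mul_self_nonneg (x - 6*y)]
    refine ⟨73*x - 444*y, 73*y - 12*x, ?_, ?_, ?_⟩
    · rcases h with h | h
      · left; nlinarith [h]
      · right; nlinarith [h]
    · obtain ⟨k, hk⟩ := h9; exact ⟨85*k - 48*y, by linarith⟩
    · have hgt : -y < 73*y - 12*x := by nlinarith [mul_self_nonneg (6*x - 37*y)]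
      have hlt : 73*y - 12*x < y := by nlinarith
      omega

private lemma base37 (x y : ℤ) (hy : y.natAbs ≤ 3)
    (h : x*x - 37*(y*y) = 9 ∨ x*x - 37*(y*y) = -9) (h9 : (9:ℤ) ∣ x - y) : False := by
  have hy1 : -3 ≤ y := by omega
  have hy2 : y ≤ 3 := by omega
  have hyy : y*y ≤ 9 := by nlinarith
  have hx2 : x*x ≤ 342 := by rcases h with h | h <;> linarith
  have hx1 : -18 ≤ x := by nlinarith
  have hx3 : x ≤ 18 := by nlinarith
  interval_cases x <;> interval_cases y <;> omega

private lemma nosol37 : ∀ n : ℕ, ∀ x y : ℤ, y.natAbs = n →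
    (x*x - 37*(y*y) = 9 ∨ x*x - 37*(y*y) = -9) → (9:ℤ) ∣ x - y → False := by
  intro n
  induction n using Nat.strong_induction_on with
  | _ n ih =>
    intro x y hn h h9
    rcases le_or_gt y.natAbs 3 with h3 | h3
    · exact base37 x y h3 h h9
    · rcases le_or_gt 4 y with hy | hy
      · obtain ⟨x', y', h', h9', hlt⟩ := step37 x y hy h h9
        exact ih y'.natAbs (hn ▸ hlt) x' y' rfl h' h9'
      · have hy' : (4:ℤ) ≤ -y := by omega
        have hsym : (-x)*(-x) - 37*((-y)*(-y)) = 9 ∨ (-x)*(-x) - 37*((-y)*(-y)) = -9 := by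
          rcases h with h | h
          · left; linear_combination h
          · right; linear_combination h
        have h9' : (9:ℤ) ∣ (-x) - (-y) := by omega
        obtain ⟨x', y', h', h9'', hlt⟩ := step37 (-x) (-y) hy' hsym h9'
        have hlt' : y'.natAbs < n := by omega
        exact ih y'.natAbs hlt' x' y' rfl h' h9''

/-- `M₁ = [[10, 7], [3, 2]]` and `M₂ = [[11, 4], [3, 1]]` have the same
characteristic polynomial `x² − 12x − 1` (hence the same eigenvalues `6 ± √37`), but are
not conjugate in `GL(2, ℤ)`. -/
theorem stmt8 :
    (!![(10 : ℤ), 7; 3, 2]).charpoly = (!![(11 : ℤ), 4; 3, 1]).charpoly ∧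
    (!![(10 : ℤ), 7; 3, 2]).charpoly = X ^ 2 - C 12 * X - C 1 ∧
    ((!![(10 : ℤ), 7; 3, 2]).charpoly.map (Int.castRingHom ℝ)).IsRoot (6 + Real.sqrt 37) ∧
    ((!![(10 : ℤ), 7; 3, 2]).charpoly.map (Int.castRingHom ℝ)).IsRoot (6 - Real.sqrt 37) ∧
    ¬ ∃ P : Matrix (Fin 2) (Fin 2) ℤ, IsUnit P.det ∧
        P * !![(10 : ℤ), 7; 3, 2] * P⁻¹ = !![(11 : ℤ), 4; 3, 1] := by
  have hc1 : (!![(10 : ℤ), 7; 3, 2]).charpoly = X ^ 2 - C 12 * X - C 1 := by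
    rw [Matrix.charpoly, Matrix.det_fin_two]
    simp [Matrix.charmatrix_apply_eq, Matrix.charmatrix_apply_ne]
    ring
  have hc2 : (!![(11 : ℤ), 4; 3, 1]).charpoly = X ^ 2 - C 12 * X - C 1 := by
    rw [Matrix.charpoly, Matrix.det_fin_two]
    simp [Matrix.charmatrix_apply_eq, Matrix.charmatrix_apply_ne]
    ring
  have hs : Real.sqrt 37 ^ 2 = 37 := Real.sq_sqrt (by norm_num)
  refine ⟨hc1.trans hc2.symm, hc1, ?_, ?_, ?_⟩
  · rw [hc1]; simp [IsRoot, eval_map]; nlinarith [hs]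
  · rw [hc1]; simp [IsRoot, eval_map]; nlinarith [hs]
  · rintro ⟨P, hu, h⟩
    have hPM : P * !![(10 : ℤ), 7; 3, 2] = !![(11 : ℤ), 4; 3, 1] * P := by
      have := congrArg (· * P) h
      simpa [Matrix.mul_assoc, Matrix.nonsing_inv_mul P hu] using this
    set a := P 0 0 with ha; set b := P 0 1 with hb
    set c := P 1 0 with hc; set d := P 1 1 with hd
    have hP : P = !![a, b; c, d] := by rw [ha, hb, hc, hd]; exact (Matrix.etaExpand_eq P).symm
    rw [hP] at hPM hu
    rw [Matrix.det_fin_two_of] at hu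
    have key := Matrix.ext_iff.mpr hPM
    have e1 := key 0 0
    have e2 := key 0 1
    have e3 := key 1 0
    have e4 := key 1 1
    simp [Matrix.mul_apply, Fin.sum_univ_two] at e1 e2 e3 e4
    have hdet : a * d - b * c = 1 ∨ a * d - b * c = -1 := Int.isUnit_iff.mp hu
    have hA : a = 3*c + d := by linarith
    have hB : 3*b = 7*c + d := by linarith
    have h3 : (3:ℤ) ∣ c + d := ⟨b - 2*c, by linarith⟩
    have hq : 3*d^2 + 8*c*d - 7*c^2 = 3 ∨ 3*d^2 + 8*c*d - 7*c^2 = -3 := by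
      rcases hdet with h1 | h1
      · left; linear_combination 3*h1 - 3*d*hA + c*hB
      · right; linear_combination 3*h1 - 3*d*hA + c*hB
    -- set x = 3d + 4c, y = c
    have hnorm : (3*d + 4*c)*(3*d + 4*c) - 37*(c*c) = 9 ∨
        (3*d + 4*c)*(3*d + 4*c) - 37*(c*c) = -9 := by
      rcases hq with h1 | h1
      · left; linear_combination 3*h1
      · right; linear_combination 3*h1
    have h9 : (9:ℤ) ∣ (3*d + 4*c) - c := by
      obtain ⟨k, hk⟩ := h3; exact ⟨k, by linarith⟩
    exact nosol37 c.natAbs (3*d + 4*c) c rfl hnorm h9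
end

section
/- Let (b_n)_{n≥0} be a sequence of positive reals and consider the continued fraction b_0 + 1/(b_1 + 1/(b_2 + ⋯)) with convergents A_n/B_n defined by the standard recurrences. If ∑ b_n diverges, then the sequence of convergents A_n/B_n converges to a single limit; moreover the even-indexed convergents increase and the odd-indexed convergents decrease (Van Vleck's theorem, divergent case). -/
open Filter Finset

private lemma vv_tendsto_of_even_odd {f : ℕ → ℝ} {L : ℝ}
    (he : Tendsto (fun n => f (2 * n)) atTop (nhds L))
    (ho : Tendsto (fun n => f (2 * n + 1)) atTop (nhds L)) :
    Tendsto f atTop (nhds L) := by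
  rw [Metric.tendsto_atTop] at he ho ⊢
  intro ε hε
  obtain ⟨N1, h1⟩ := he ε hε
  obtain ⟨N2, h2⟩ := ho ε hε
  refine ⟨2 * (N1 + N2) + 2, fun n hn => ?_⟩
  rcases Nat.even_or_odd n with ⟨k, hk⟩ | ⟨k, hk⟩
  · have hk' : n = 2 * k := by omega
    rw [hk']
    exact h1 k (by omega)
  · rw [hk]
    exact h2 k (by omega)

/-- Van Vleck, divergent case: for a continued fraction
`b_0 + 1/(b_1 + 1/(b_2 + ⋯))` with positive real entries, if `∑ b_n` diverges then the
convergents `A_n/B_n` converge to a single limit; moreover the even-indexed convergents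
increase and the odd-indexed convergents decrease. Here `A (n+1) = A_n`, `B (n+1) = B_n`
with conventions `A 0 = A_{-1} = 1`, `B 0 = B_{-1} = 0`. -/
theorem stmt10 (b : ℕ → ℝ) (hb : ∀ n, 0 < b n)
    (A B : ℕ → ℝ)
    (hA0 : A 0 = 1) (hA1 : A 1 = b 0)
    (hB0 : B 0 = 0) (hB1 : B 1 = 1)
    (hA : ∀ n, A (n + 2) = b (n + 1) * A (n + 1) + A n)
    (hB : ∀ n, B (n + 2) = b (n + 1) * B (n + 1) + B n)
    (hdiv : Tendsto (fun N => ∑ i ∈ Finset.range N, b i) atTop atTop) :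
    (∃ L : ℝ, Tendsto (fun n => A (n + 1) / B (n + 1)) atTop (nhds L)) ∧
    Monotone (fun n => A (2 * n + 1) / B (2 * n + 1)) ∧
    Antitone (fun n => A (2 * n + 2) / B (2 * n + 2)) := by
  -- positivity of B
  have hBpos' : ∀ n, 0 ≤ B n ∧ 0 < B (n + 1) := by
    intro n
    induction n with
    | zero => simp [hB0, hB1]
    | succ k ih =>
      refine ⟨ih.2.le, ?_⟩
      rw [hB k]
      have h1 : 0 < b (k + 1) * B (k + 1) := mul_pos (hb _) ih.2
      linarith [ih.1]
  have hBpos : ∀ n, 0 < B (n + 1) := fun n => (hBpos' n).2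
  have hBnn : ∀ n, 0 ≤ B n := fun n => (hBpos' n).1
  -- determinant identity
  have hD : ∀ n, A (n + 1) * B n - A n * B (n + 1) = (-1 : ℝ) ^ (n + 1) := by
    intro n
    induction n with
    | zero => simp [hA0, hA1, hB0, hB1]
    | succ k ih =>
      calc A (k + 2) * B (k + 1) - A (k + 1) * B (k + 2)
          = -(A (k + 1) * B k - A k * B (k + 1)) := by rw [hA k, hB k]; ring
        _ = -(-1 : ℝ) ^ (k + 1) := by rw [ih]
        _ = (-1 : ℝ) ^ (k + 2) := by ring
  -- two-step determinant
  have hD2 : ∀ n, A (n + 3) * B (n + 1) - A (n + 1) * B (n + 3)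
      = b (n + 2) * (-1 : ℝ) ^ n := by
    intro n
    calc A (n + 3) * B (n + 1) - A (n + 1) * B (n + 3)
        = b (n + 2) * (A (n + 2) * B (n + 1) - A (n + 1) * B (n + 2)) := by
          rw [hA (n + 1), hB (n + 1)]; ring
      _ = b (n + 2) * (-1 : ℝ) ^ (n + 2) := by rw [hD (n + 1)]
      _ = b (n + 2) * (-1 : ℝ) ^ n := by ring
  -- lower bound on B
  set m : ℝ := min 1 (b 1) with hm
  have hm0 : 0 < m := lt_min one_pos (hb 1)
  have hB2 : B 2 = b 1 := by rw [hB 0, hB0, hB1]; ring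
  have hBm' : ∀ n, m ≤ B (n + 1) ∧ m ≤ B (n + 2) := by
    intro n
    induction n with
    | zero => exact ⟨by rw [hB1]; exact min_le_left _ _, by rw [hB2]; exact min_le_right _ _⟩
    | succ k ih =>
      refine ⟨ih.2, ?_⟩
      have : B (k + 1) ≤ B (k + 3) := by
        rw [hB (k + 1)]
        nlinarith [hb (k + 2), hBpos (k + 1)]
      linarith [ih.1]
  have hBm : ∀ n, m ≤ B (n + 1) := fun n => (hBm' n).1
  -- the product of consecutive denominators tends to infinity
  have hCge : ∀ n, m ^ 2 * (∑ i ∈ Finset.range n, b (i + 2)) ≤ B (n + 1) * B (n + 2) := by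
    intro n
    induction n with
    | zero => simpa using (mul_pos (hBpos 0) (hBpos 1)).le
    | succ k ih =>
      rw [Finset.sum_range_succ]
      have hrec : B (k + 2) * B (k + 3) = B (k + 1) * B (k + 2) + b (k + 2) * B (k + 2) ^ 2 := by
        rw [hB (k + 1)]; ring
      have hmB : m ^ 2 ≤ B (k + 2) ^ 2 := by
        have := hBm (k + 1)
        nlinarith [hm0]
      rw [hrec]
      nlinarith [hb (k + 2), mul_le_mul_of_nonneg_left hmB (hb (k + 2)).le]
  have hsum : Tendsto (fun n => ∑ i ∈ Finset.range n, b (i + 2)) atTop atTop := by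
    have hshift : ∀ n, ∑ i ∈ Finset.range (n + 2), b i
        = (b 0 + b 1) + ∑ i ∈ Finset.range n, b (i + 2) := by
      intro n
      induction n with
      | zero => simp [Finset.sum_range_succ]
      | succ k ih => rw [Finset.sum_range_succ, ih, Finset.sum_range_succ]; ring
    have h1 : Tendsto (fun n => ∑ i ∈ Finset.range (n + 2), b i) atTop atTop :=
      hdiv.comp (tendsto_add_atTop_nat 2)
    have h2 : Tendsto (fun n => (b 0 + b 1) + ∑ i ∈ Finset.range n, b (i + 2)) atTop atTop := by
      simpa [hshift] using h1
    exact (tendsto_atTop_add_const_right atTop (-(b 0 + b 1)) h2).congr fun n => by ring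
  have hC : Tendsto (fun n => B (n + 1) * B (n + 2)) atTop atTop := by
    refine tendsto_atTop_mono hCge ?_
    exact (hsum.const_mul_atTop (by positivity : (0:ℝ) < m ^ 2))
  -- convergents
  set x : ℕ → ℝ := fun n => A (n + 1) / B (n + 1) with hx
  -- single step comparison:  x (2n) < x (2n+1)
  have hstep : ∀ n, A (n + 1) / B (n + 1) + ((-1:ℝ)^n) / (B (n + 1) * B (n + 2))
      = A (n + 2) / B (n + 2) := by
    intro n
    have h : A (n + 2) * B (n + 1) - A (n + 1) * B (n + 2) = (-1:ℝ) ^ n := by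
      have hh := hD (n + 1)
      have hp : (-1:ℝ) ^ (n + 1 + 1) = (-1:ℝ) ^ n := by ring
      rw [hp] at hh
      exact hh
    have h1 : (0:ℝ) < B (n + 1) := hBpos n
    have h2 : (0:ℝ) < B (n + 2) := hBpos (n + 1)
    field_simp
    linear_combination (-1 : ℝ) * h
  -- monotone even
  have hmono : Monotone (fun n => A (2 * n + 1) / B (2 * n + 1)) := by
    apply monotone_nat_of_le_succ
    intro n
    have hd := hD2 (2 * n)
    have h1 := hBpos (2 * n)
    have h3 := hBpos (2 * n + 2)
    rw [div_le_div_iff₀ h1 (by rw [show 2 * (n + 1) + 1 = 2 * n + 2 + 1 by ring]; exact h3)]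
    have hpow : ((-1:ℝ)) ^ (2 * n) = 1 := by
      rw [pow_mul]; norm_num
    have : A (2 * n + 3) * B (2 * n + 1) - A (2 * n + 1) * B (2 * n + 3) = b (2 * n + 2) := by
      rw [hd, hpow]; ring
    have hb' := hb (2 * n + 2)
    have heq : 2 * (n + 1) + 1 = 2 * n + 3 := by ring
    rw [heq]
    linarith
  -- antitone odd
  have hanti : Antitone (fun n => A (2 * n + 2) / B (2 * n + 2)) := by
    apply antitone_nat_of_succ_le
    intro n
    have hd := hD2 (2 * n + 1)
    have h1 := hBpos (2 * n + 1)
    have h3 := hBpos (2 * n + 3)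
    have heq : 2 * (n + 1) + 2 = 2 * n + 4 := by ring
    rw [heq, div_le_div_iff₀ (by simpa using h3) h1]
    have hpow : ((-1:ℝ)) ^ (2 * n + 1) = -1 := by
      rw [pow_succ, pow_mul]; norm_num
    have : A (2 * n + 4) * B (2 * n + 2) - A (2 * n + 2) * B (2 * n + 4) = -b (2 * n + 3) := by
      rw [hd, hpow]; ring
    have hb' := hb (2 * n + 3)
    linarith
  refine ⟨?_, hmono, hanti⟩
  -- even subsequence converges
  set e : ℕ → ℝ := fun n => x (2 * n) with he
  set y : ℕ → ℝ := fun n => x (2 * n + 1) with hy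
  have hey : ∀ n, e n + 1 / (B (2 * n + 1) * B (2 * n + 2)) = y n := by
    intro n
    have h := hstep (2 * n)
    have hpow : ((-1:ℝ)) ^ (2 * n) = 1 := by rw [pow_mul]; norm_num
    rw [hpow] at h
    exact h
  have hlt : ∀ n, e n ≤ y n := by
    intro n
    have h := hey n
    have hp : 0 < B (2 * n + 1) * B (2 * n + 2) := mul_pos (hBpos _) (hBpos _)
    nlinarith [h, one_div_pos.mpr hp]
  have hbdd : BddAbove (Set.range e) := by
    refine ⟨y 0, ?_⟩
    rintro _ ⟨n, rfl⟩
    calc e n ≤ y n := hlt n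
      _ ≤ y 0 := by
        have := hanti (Nat.zero_le n)
        simpa [hy, hx] using this
  have hemono : Monotone e := by
    intro a c hac
    have := hmono hac
    simpa [he, hx] using this
  have heL : Tendsto e atTop (nhds (⨆ n, e n)) := tendsto_atTop_ciSup hemono hbdd
  set L := ⨆ n, e n with hL
  have hC2 : Tendsto (fun n => B (2 * n + 1) * B (2 * n + 2)) atTop atTop := by
    have h2n : Tendsto (fun n : ℕ => 2 * n) atTop atTop :=
      tendsto_atTop_mono (fun n => Nat.le_mul_of_pos_left n two_pos) tendsto_id
    exact hC.comp h2n
  have hinv : Tendsto (fun n => 1 / (B (2 * n + 1) * B (2 * n + 2))) atTop (nhds 0) := by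
    exact tendsto_const_nhds.div_atTop hC2
  have hyL : Tendsto y atTop (nhds L) := by
    have := heL.add hinv
    rw [add_zero] at this
    exact this.congr hey
  refine ⟨L, ?_⟩
  exact vv_tendsto_of_even_odd heL hyL
end

section
/- Let (b_n)_{n≥1} be a sequence of positive reals with ∑ b_n < ∞, and let A_n/B_n be the convergents of the continued fraction b_0 + K_{n=1}^∞ (1/b_n). Then the even convergents A_{2n}/B_{2n} and the odd convergents A_{2n−1}/B_{2n−1} converge monotonically to two distinct limits (Van Vleck's theorem, convergent case). -/
open Filter

/-- Van Vleck, convergent case: for a continued fraction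
`b_0 + K_{n=1}^∞ (1/b_n)` with positive real entries such that `∑_{n≥1} b_n < ∞`, the
even-indexed convergents and the odd-indexed convergents converge monotonically to two
distinct limits. Here `A (n+1) = A_n`, `B (n+1) = B_n` with `A 0 = A_{-1} = 1`,
`B 0 = B_{-1} = 0`. -/
theorem stmt11 (b : ℕ → ℝ) (hb : ∀ n, 0 < b n)
    (A B : ℕ → ℝ)
    (hA0 : A 0 = 1) (hA1 : A 1 = b 0)
    (hB0 : B 0 = 0) (hB1 : B 1 = 1)
    (hA : ∀ n, A (n + 2) = b (n + 1) * A (n + 1) + A n)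
    (hB : ∀ n, B (n + 2) = b (n + 1) * B (n + 1) + B n)
    (hsum : Summable fun n => b (n + 1)) :
    ∃ LE LO : ℝ, LE ≠ LO ∧
      Monotone (fun n => A (2 * n + 1) / B (2 * n + 1)) ∧
      Tendsto (fun n => A (2 * n + 1) / B (2 * n + 1)) atTop (nhds LE) ∧
      Antitone (fun n => A (2 * n + 2) / B (2 * n + 2)) ∧
      Tendsto (fun n => A (2 * n + 2) / B (2 * n + 2)) atTop (nhds LO) := by
  -- positivity of B
  have hBpair : ∀ n, 0 ≤ B n ∧ 0 < B (n + 1) := by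
    intro n
    induction n with
    | zero => simp [hB0, hB1]
    | succ n ih =>
      refine ⟨ih.2.le, ?_⟩
      rw [hB n]
      nlinarith [hb (n + 1), ih.1, ih.2]
  have hBpos : ∀ n, 0 < n → 0 < B n := by
    intro n hn
    cases n with
    | zero => omega
    | succ m => exact (hBpair m).2
  -- determinant identity
  have hD : ∀ n, A (n + 1) * B n - A n * B (n + 1) = (-1 : ℝ) ^ (n + 1) := by
    intro n
    induction n with
    | zero => simp [hA0, hA1, hB0, hB1]
    | succ n ih =>
      rw [hA n, hB n]
      linear_combination (-1 : ℝ) * ih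
  -- two-step identity
  have hE : ∀ n, A (n + 3) * B (n + 1) - A (n + 1) * B (n + 3) = b (n + 2) * (-1 : ℝ) ^ n := by
    intro n
    rw [hA (n + 1), hB (n + 1)]
    have h := hD (n + 1)
    have hpow : ((-1 : ℝ)) ^ (n + 1 + 1) = (-1 : ℝ) ^ n := by
      rw [pow_succ, pow_succ]; ring
    rw [hpow] at h
    linear_combination b (n + 2) * h
  -- bound on B
  set S : ℝ := ∑' k, b (k + 1) with hSdef
  set C : ℝ := Real.exp S with hCdef
  have hCpos : 0 < C := Real.exp_pos S
  have hBprod : ∀ n, B n ≤ ∏ k ∈ Finset.range n, (1 + b (k + 1)) ∧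
      B (n + 1) ≤ ∏ k ∈ Finset.range n, (1 + b (k + 1)) := by
    intro n
    induction n with
    | zero => simp [hB0, hB1]
    | succ n ih =>
      have hP0 : (0 : ℝ) ≤ ∏ k ∈ Finset.range n, (1 + b (k + 1)) := by
        apply Finset.prod_nonneg
        intro k _
        nlinarith [hb (k + 1)]
      have hPsucc : ∏ k ∈ Finset.range (n + 1), (1 + b (k + 1))
          = (∏ k ∈ Finset.range n, (1 + b (k + 1))) * (1 + b (n + 1)) := by
        rw [Finset.prod_range_succ]
      constructor
      · rw [hPsucc]
        nlinarith [ih.2, hb (n + 1)]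
      · rw [hPsucc, hB n]
        nlinarith [ih.1, ih.2, hb (n + 1)]
  have hBC : ∀ n, B n ≤ C := by
    intro n
    have h1 := (hBprod n).1
    have h2 : ∏ k ∈ Finset.range n, (1 + b (k + 1))
        ≤ ∏ k ∈ Finset.range n, Real.exp (b (k + 1)) := by
      apply Finset.prod_le_prod
      · intro k _; nlinarith [hb (k + 1)]
      · intro k _
        have := Real.add_one_le_exp (b (k + 1))
        linarith
    have h3 : ∏ k ∈ Finset.range n, Real.exp (b (k + 1))
        = Real.exp (∑ k ∈ Finset.range n, b (k + 1)) := (Real.exp_sum _ _).symm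
    have h4 : ∑ k ∈ Finset.range n, b (k + 1) ≤ S :=
      Summable.sum_le_tsum (Finset.range n) (fun k _ => (hb (k + 1)).le) hsum
    have h5 : Real.exp (∑ k ∈ Finset.range n, b (k + 1)) ≤ C := by
      rw [hCdef]
      exact Real.exp_le_exp.mpr h4
    calc B n ≤ _ := h1
      _ ≤ _ := h2
      _ = _ := h3
      _ ≤ C := h5
  -- monotone even convergents
  have hmon : Monotone (fun n => A (2 * n + 1) / B (2 * n + 1)) := by
    refine monotone_nat_of_le_succ fun n => ?_
    show A (2 * n + 1) / B (2 * n + 1) ≤ A (2 * (n + 1) + 1) / B (2 * (n + 1) + 1)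
    have h3 : 2 * (n + 1) + 1 = 2 * n + 3 := by ring
    rw [h3, div_le_div_iff₀ (hBpos _ (by omega)) (hBpos _ (by omega))]
    have h := hE (2 * n)
    have hpow : ((-1 : ℝ)) ^ (2 * n) = 1 := by
      rw [pow_mul]; norm_num
    rw [hpow, mul_one] at h
    nlinarith [hb (2 * n + 2)]
  -- antitone odd convergents
  have hant : Antitone (fun n => A (2 * n + 2) / B (2 * n + 2)) := by
    refine antitone_nat_of_succ_le fun n => ?_
    show A (2 * (n + 1) + 2) / B (2 * (n + 1) + 2) ≤ A (2 * n + 2) / B (2 * n + 2)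
    have h4 : 2 * (n + 1) + 2 = 2 * n + 4 := by ring
    rw [h4, div_le_div_iff₀ (hBpos _ (by omega)) (hBpos _ (by omega))]
    have h := hE (2 * n + 1)
    have e1 : 2 * n + 1 + 3 = 2 * n + 4 := by omega
    have e2 : 2 * n + 1 + 1 = 2 * n + 2 := by omega
    have e3 : 2 * n + 1 + 2 = 2 * n + 3 := by omega
    rw [e1, e2, e3] at h
    have hpow : ((-1 : ℝ)) ^ (2 * n + 1) = -1 := by
      rw [pow_succ, pow_mul]; norm_num
    rw [hpow] at h
    nlinarith [hb (2 * n + 3)]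
  -- gap identity
  have hgap : ∀ n, A (2 * n + 1) / B (2 * n + 1) - A (2 * n + 2) / B (2 * n + 2)
      = -(1 / (B (2 * n + 1) * B (2 * n + 2))) := by
    intro n
    have h := hD (2 * n + 1)
    have hpow : ((-1 : ℝ)) ^ (2 * n + 1 + 1) = 1 := by
      rw [show 2 * n + 1 + 1 = 2 * (n + 1) from by ring, pow_mul]; norm_num
    rw [hpow] at h
    have p1 := hBpos (2 * n + 1) (by omega)
    have p2 := hBpos (2 * n + 2) (by omega)
    field_simp
    linear_combination -h
  -- ordering: even convergent below odd
  have hlt : ∀ n, A (2 * n + 1) / B (2 * n + 1) ≤ A (2 * n + 2) / B (2 * n + 2) := by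
    intro n
    have h := hgap n
    have p1 := hBpos (2 * n + 1) (by omega)
    have p2 := hBpos (2 * n + 2) (by omega)
    have : 0 < 1 / (B (2 * n + 1) * B (2 * n + 2)) := by positivity
    linarith
  -- boundedness
  have hbddA : BddAbove (Set.range fun n => A (2 * n + 1) / B (2 * n + 1)) := by
    refine ⟨A 2 / B 2, ?_⟩
    rintro x ⟨n, rfl⟩
    calc A (2 * n + 1) / B (2 * n + 1) ≤ A (2 * n + 2) / B (2 * n + 2) := hlt n
      _ ≤ A (2 * 0 + 2) / B (2 * 0 + 2) := hant (Nat.zero_le n)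
      _ = A 2 / B 2 := by norm_num
  have hbddB : BddBelow (Set.range fun n => A (2 * n + 2) / B (2 * n + 2)) := by
    refine ⟨A 1 / B 1, ?_⟩
    rintro x ⟨n, rfl⟩
    calc A 1 / B 1 = A (2 * 0 + 1) / B (2 * 0 + 1) := by norm_num
      _ ≤ A (2 * n + 1) / B (2 * n + 1) := hmon (Nat.zero_le n)
      _ ≤ A (2 * n + 2) / B (2 * n + 2) := hlt n
  -- limits
  have hLE := tendsto_atTop_ciSup hmon hbddA
  have hLO := tendsto_atTop_ciInf hant hbddB
  refine ⟨_, _, ?_, hmon, hLE, hant, hLO⟩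
  -- distinct limits
  have hsub := hLE.sub hLO
  have hub : ∀ n, (fun n => A (2 * n + 1) / B (2 * n + 1)) n
      - (fun n => A (2 * n + 2) / B (2 * n + 2)) n ≤ -(1 / C ^ 2) := by
    intro n
    show A (2 * n + 1) / B (2 * n + 1) - A (2 * n + 2) / B (2 * n + 2) ≤ -(1 / C ^ 2)
    rw [hgap n]
    have p1 := hBpos (2 * n + 1) (by omega)
    have p2 := hBpos (2 * n + 2) (by omega)
    have hprod : B (2 * n + 1) * B (2 * n + 2) ≤ C ^ 2 := by
      have h1 := hBC (2 * n + 1)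
      have h2 := hBC (2 * n + 2)
      nlinarith
    have : 1 / C ^ 2 ≤ 1 / (B (2 * n + 1) * B (2 * n + 2)) :=
      one_div_le_one_div_of_le (by positivity) hprod
    linarith
  have hle : (⨆ n, A (2 * n + 1) / B (2 * n + 1)) - (⨅ n, A (2 * n + 2) / B (2 * n + 2))
      ≤ -(1 / C ^ 2) :=
    le_of_tendsto hsub (Filter.Eventually.of_forall hub)
  have hCpos2 : 0 < 1 / C ^ 2 := by positivity
  intro h
  rw [h] at hle
  linarith
end
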